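/- arXiv:2110.03401 — 5 statements merged into one kernel-verified Lean document; each statement's English description precedes it below -/
import Mathlib

section
/- If a multiplicative function f : ℕ → ℂ has period m, satisfies f(m) ≠ 0, and has bounded partial sums, then the following three conditions hold: (i) for some prime q dividing m, ∑_{k=0}^∞ f(q^k)/q^k = 0; (ii) for each prime power p^a exactly dividing m, f(p^k) = f(p^a) for all k ≥ a; (iii) for each prime p with gcd(p,m) = 1, f(p^k) = 1 for all k ≥ 1. -/
/-- `f` is multiplicative: `f 1 = 1` and `f (m*n) = f m * f n` for coprime `m, n`. -/
def IsMultiplicativeFn (f : ℕ → ℂ) : Prop :=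
  f 1 = 1 ∧ ∀ m n : ℕ, Nat.Coprime m n → f (m * n) = f m * f n

/-- `f` has bounded partial sums. -/
def HasBoundedPartialSums (f : ℕ → ℂ) : Prop :=
  ∃ C : ℝ, 0 < C ∧ ∀ N : ℕ, 1 ≤ N → ‖∑ n ∈ Finset.Icc 1 N, f n‖ ≤ C

set_option maxHeartbeats 1000000

section
variable {f : ℕ → ℂ} {m : ℕ}

lemma per_mul (hper : ∀ n : ℕ, 1 ≤ n → f (n + m) = f n) :
    ∀ j n : ℕ, 1 ≤ n → f (n + j * m) = f n := by
  intro j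
  induction j with
  | zero => simp
  | succ j ih =>
    intro n hn
    have h : n + (j + 1) * m = (n + j * m) + m := by ring
    rw [h, hper _ (by omega), ih n hn]

lemma f_cop (hm : 1 ≤ m) (hmul : IsMultiplicativeFn f)
    (hper : ∀ n : ℕ, 1 ≤ n → f (n + m) = f n) (hfm : f m ≠ 0) :
    ∀ n : ℕ, 1 ≤ n → n.Coprime m → f n = 1 := by
  intro n hn hc
  have h1 : f (n * m) = f n * f m := hmul.2 n m hc
  have h2 : f (n * m) = f m := by
    obtain ⟨k, rfl⟩ := Nat.exists_eq_add_of_le hn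
    have h : (1 + k) * m = m + k * m := by ring
    rw [h, per_mul hper _ _ hm]
  have h3 : f n * f m = f m := h1.symm.trans h2
  have := mul_right_cancel₀ hfm (h3.trans (one_mul (f m)).symm)
  exact this

lemma part_ii (hm : 1 ≤ m) (hmul : IsMultiplicativeFn f)
    (hper : ∀ n : ℕ, 1 ≤ n → f (n + m) = f n) (hfm : f m ≠ 0) :
    ∀ p a : ℕ, p.Prime → p ^ a ∣ m → ¬ p ^ (a + 1) ∣ m →
      ∀ k : ℕ, a ≤ k → f (p ^ k) = f (p ^ a) := by
  intro p a hp hpa hpa1 k hk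
  obtain ⟨m', hm'⟩ := hpa
  have hpm' : ¬ p ∣ m' := by
    intro hd
    obtain ⟨t, ht⟩ := hd
    exact hpa1 ⟨t, by rw [hm', ht]; ring⟩
  have hm'pos : 1 ≤ m' := by
    rcases Nat.eq_zero_or_pos m' with h | h
    · subst h; simp at hm'; omega
    · exact h
  have hcop : ∀ j : ℕ, Nat.Coprime (p ^ j) m' :=
    fun j => (Nat.Prime.coprime_iff_not_dvd hp |>.mpr hpm').pow_left j
  have hfk : f (p ^ k * m') = f (p ^ k) * f m' := hmul.2 _ _ (hcop k)
  have hfa : f (p ^ a * m') = f (p ^ a) * f m' := hmul.2 _ _ (hcop a)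
  have hper' : f (p ^ k * m') = f (p ^ a * m') := by
    have h3 : 1 ≤ p ^ (k - a) := Nat.one_le_pow _ _ hp.pos
    obtain ⟨u, hu⟩ := Nat.exists_eq_add_of_le h3
    have h2 : p ^ k = p ^ a * p ^ (k - a) := by
      rw [← pow_add]; congr 1; omega
    have h : p ^ k * m' = p ^ a * m' + u * m := by
      rw [h2, hu, hm']; ring
    rw [h, per_mul hper]
    have : 0 < p ^ a * m' := Nat.mul_pos (pow_pos hp.pos a) hm'pos
    omega
  have hfm' : f m' ≠ 0 := by
    intro h0
    exact hfm (by rw [hm', hfa, h0, mul_zero])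
  exact mul_right_cancel₀ hfm' (hfk.symm.trans (hper'.trans hfa))

lemma part_iii (hm : 1 ≤ m) (hmul : IsMultiplicativeFn f)
    (hper : ∀ n : ℕ, 1 ≤ n → f (n + m) = f n) (hfm : f m ≠ 0) :
    ∀ p : ℕ, p.Prime → Nat.Coprime p m → ∀ k : ℕ, 1 ≤ k → f (p ^ k) = 1 := by
  intro p hp hc k _
  exact f_cop hm hmul hper hfm _ (Nat.one_le_pow _ _ hp.pos) (hc.pow_left k)

end


open Function

/-- Equiv: (k, r) with ¬ q ∣ r ↦ q^k * r, onto nonzero naturals. -/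
noncomputable def primeSplit (q : ℕ) (hq : q.Prime) :
    ℕ × {r : ℕ // ¬ q ∣ r} ≃ {n : ℕ // n ≠ 0} where
  toFun x := ⟨q ^ x.1 * x.2.1, by
    have hr : x.2.1 ≠ 0 := fun h => x.2.2 (h ▸ dvd_zero q)
    exact mul_ne_zero (pow_ne_zero _ hq.ne_zero) hr⟩
  invFun n := ⟨n.1.factorization q, ⟨ordCompl[q] n.1, Nat.not_dvd_ordCompl hq n.2⟩⟩
  left_inv := by
    rintro ⟨k, r, hr⟩
    have hr0 : r ≠ 0 := fun h => hr (h ▸ dvd_zero q)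
    have hfac : (q ^ k * r).factorization q = k := by
      rw [Nat.factorization_mul (pow_ne_zero _ hq.ne_zero) hr0]
      simp [hq.factorization_pow, Nat.factorization_eq_zero_of_not_dvd hr]
    ext
    · simpa using hfac
    · simp only [hfac]
      exact Nat.mul_div_cancel_left _ (pow_pos hq.pos k)
  right_inv := by
    rintro ⟨n, hn⟩
    ext
    simpa using Nat.ordProj_mul_ordCompl_eq_self n q


open Function in
lemma extract_prime (g : ℕ → ℂ) (hgs : Summable fun n => ‖g n‖) (hg0 : g 0 = 0)
    (hgm : ∀ a b : ℕ, Nat.Coprime a b → g (a * b) = g a * g b)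
    (q : ℕ) (hq : q.Prime) :
    ∑' n, g n = (∑' k, g (q ^ k)) * (∑' n, if q ∣ n then 0 else g n) := by
  have hsum : Summable g := hgs.of_norm
  have hsupp : support g ⊆ {n : ℕ | n ≠ 0} := by
    intro n hn
    simp only [Set.mem_setOf_eq]
    rintro rfl
    exact hn hg0
  have h1 : ∑' n, g n = ∑' n : {n : ℕ // n ≠ 0}, g n.1 :=
    (tsum_subtype_eq_of_support_subset hsupp).symm
  have h2 : ∑' n : {n : ℕ // n ≠ 0}, g n.1
      = ∑' x : ℕ × {r : ℕ // ¬ q ∣ r}, g ((primeSplit q hq) x).1 :=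
    ((primeSplit q hq).tsum_eq fun n => g n.1).symm
  have hterm : ∀ x : ℕ × {r : ℕ // ¬ q ∣ r},
      g ((primeSplit q hq) x).1 = g (q ^ x.1) * g x.2.1 := by
    rintro ⟨k, r, hr⟩
    exact hgm _ _ ((hq.coprime_iff_not_dvd.mpr hr).pow_left k)
  have hsume : Summable fun x : ℕ × {r : ℕ // ¬ q ∣ r} => g (q ^ x.1) * g x.2.1 :=
    (((primeSplit q hq).summable_iff
      (f := fun n : {n : ℕ // n ≠ 0} => g n.1)).mpr (hsum.subtype _)).congr hterm
  have hslice : ∀ k : ℕ, Summable (fun r : {r : ℕ // ¬ q ∣ r} => g (q ^ k) * g r.1) := by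
    intro k
    exact Summable.mul_left _ (hsum.subtype _)
  have h3 := Summable.tsum_prod' (f := fun x : ℕ × {r : ℕ // ¬ q ∣ r} => g (q ^ x.1) * g x.2.1) hsume hslice
  have h5 : ∑' r : {r : ℕ // ¬ q ∣ r}, g r.1 = ∑' n, if q ∣ n then 0 else g n := by
    refine (tsum_subtype {r : ℕ | ¬ q ∣ r} g).trans (tsum_congr fun n => ?_)
    by_cases h : q ∣ n <;> simp [Set.indicator, h]
  rw [h1, h2, tsum_congr hterm, h3]
  rw [show (∑' (k : ℕ) (r : {r : ℕ // ¬ q ∣ r}), g (q ^ k) * g r.1)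
      = ∑' (k : ℕ), g (q ^ k) * ∑' r : {r : ℕ // ¬ q ∣ r}, g r.1 from
    tsum_congr fun k => tsum_mul_left, tsum_mul_right, h5]

lemma extract_primes (Q : Finset ℕ) (hQ : ∀ q ∈ Q, q.Prime) (g : ℕ → ℂ)
    (hgs : Summable fun n => ‖g n‖) (hg0 : g 0 = 0)
    (hgm : ∀ a b : ℕ, Nat.Coprime a b → g (a * b) = g a * g b) :
    ∑' n, g n = (∏ q ∈ Q, ∑' k, g (q ^ k)) *
      (∑' n, if ∃ q ∈ Q, q ∣ n then 0 else g n) := by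
  classical
  induction Q using Finset.induction_on generalizing g with
  | empty => simp
  | @insert q Q hqQ ih =>
    have hq : q.Prime := hQ q (Finset.mem_insert_self q Q)
    have hQ' : ∀ p ∈ Q, p.Prime := fun p hp => hQ p (Finset.mem_insert_of_mem hp)
    set g1 : ℕ → ℂ := fun n => if q ∣ n then 0 else g n with hg1def
    have hg1s : Summable fun n => ‖g1 n‖ := by
      apply Summable.of_nonneg_of_le (fun n => norm_nonneg _) _ hgs
      intro n
      by_cases h : q ∣ n <;> simp [hg1def, h]
    have hg10 : g1 0 = 0 := by simp [hg1def]
    have hg1m : ∀ a b : ℕ, Nat.Coprime a b → g1 (a * b) = g1 a * g1 b := by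
      intro a b hab
      by_cases ha : q ∣ a
      · have : q ∣ a * b := ha.mul_right b
        simp [hg1def, ha, this]
      · by_cases hb : q ∣ b
        · have : q ∣ a * b := hb.mul_left a
          simp [hg1def, hb, this]
        · have hnab : ¬ q ∣ a * b := by
            intro h
            rcases (Nat.Prime.dvd_mul hq).mp h with h' | h' <;> [exact ha h'; exact hb h']
          simp only [hg1def, if_neg ha, if_neg hb, if_neg hnab]
          exact hgm a b hab
    have step := extract_prime g hgs hg0 hgm q hq
    have hrec := ih hQ' g1 hg1s hg10 hg1m
    have hpow : ∀ p ∈ Q, ∀ k : ℕ, g1 (p ^ k) = g (p ^ k) := by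
      intro p hp k
      have hne : q ≠ p := fun h => hqQ (h ▸ hp)
      have : ¬ q ∣ p ^ k := by
        intro h
        have := hq.dvd_of_dvd_pow h
        exact hne ((Nat.prime_dvd_prime_iff_eq hq (hQ' p hp)).mp this)
      simp [hg1def, this]
    have hprod : (∏ p ∈ Q, ∑' k, g1 (p ^ k)) = ∏ p ∈ Q, ∑' k, g (p ^ k) :=
      Finset.prod_congr rfl fun p hp => tsum_congr fun k => hpow p hp k
    have hite : (fun n => if ∃ p ∈ Q, p ∣ n then 0 else g1 n)
        = fun n => if ∃ p ∈ insert q Q, p ∣ n then 0 else g n := by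
      funext n
      by_cases h : ∃ p ∈ Q, p ∣ n
      · have h' : ∃ p ∈ insert q Q, p ∣ n := by
          obtain ⟨p, hp, hpn⟩ := h
          exact ⟨p, Finset.mem_insert_of_mem hp, hpn⟩
        simp [h, h']
      · by_cases hqn : q ∣ n
        · have h' : ∃ p ∈ insert q Q, p ∣ n := ⟨q, Finset.mem_insert_self q Q, hqn⟩
          simp [h, h', hg1def, hqn]
        · have h' : ¬ ∃ p ∈ insert q Q, p ∣ n := by
            rintro ⟨p, hp, hpn⟩
            rcases Finset.mem_insert.mp hp with rfl | hp'
            · exact hqn hpn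
            · exact h ⟨p, hp', hpn⟩
          simp [h, h', hg1def, hqn]
    rw [step, hrec, hprod, hite, Finset.prod_insert hqQ]
    ring


section
variable {f : ℕ → ℂ} {m : ℕ}

lemma f_rep (hm : 1 ≤ m) (hper : ∀ n : ℕ, 1 ≤ n → f (n + m) = f n) :
    ∀ n : ℕ, 1 ≤ n → ∃ j ∈ Finset.Icc 1 m, f n = f j := by
  intro n
  induction n using Nat.strong_induction_on with
  | _ n ih =>
    intro hn
    by_cases h : n ≤ m
    · exact ⟨n, Finset.mem_Icc.mpr ⟨hn, h⟩, rfl⟩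
    · have h1 : 1 ≤ n - m := by omega
      have h2 : n - m < n := by omega
      obtain ⟨j, hj, hfj⟩ := ih (n - m) h2 h1
      refine ⟨j, hj, ?_⟩
      have : n = (n - m) + m := by omega
      rw [this, hper _ h1, hfj]

lemma f_bound (hm : 1 ≤ m) (hper : ∀ n : ℕ, 1 ≤ n → f (n + m) = f n) :
    ∃ M : ℝ, 0 < M ∧ ∀ n : ℕ, 1 ≤ n → ‖f n‖ ≤ M := by
  refine ⟨(∑ j ∈ Finset.Icc 1 m, ‖f j‖) + 1, by positivity, ?_⟩
  intro n hn
  obtain ⟨j, hj, hfj⟩ := f_rep hm hper n hn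
  rw [hfj]
  have h1 : ‖f j‖ ≤ ∑ j ∈ Finset.Icc 1 m, ‖f j‖ :=
    Finset.single_le_sum (fun i _ => norm_nonneg (f i)) hj
  linarith

lemma summable_coeff {s : ℝ} (hs : 1 < s) : Summable fun n : ℕ => (n : ℝ) ^ (-s) := by
  have h : ∀ n : ℕ, (n : ℝ) ^ (-s) = ((n : ℝ) ^ s)⁻¹ := fun n =>
    Real.rpow_neg (Nat.cast_nonneg n) s
  simpa only [h] using Real.summable_nat_rpow_inv.mpr hs

lemma summable_g (hm : 1 ≤ m) (hper : ∀ n : ℕ, 1 ≤ n → f (n + m) = f n)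
    {s : ℝ} (hs : 1 < s) :
    Summable fun n : ℕ => ‖f n * (((n : ℝ) ^ (-s) : ℝ) : ℂ)‖ := by
  obtain ⟨M, hM0, hM⟩ := f_bound hm hper
  refine Summable.of_nonneg_of_le (fun n => norm_nonneg _)
    (f := fun n : ℕ => M * (n : ℝ) ^ (-s)) ?_ ((summable_coeff hs).mul_left M)
  intro n
  rcases Nat.eq_zero_or_pos n with rfl | hn
  · simp [Real.zero_rpow (by linarith : -s ≠ 0)]
  · rw [norm_mul, Complex.norm_real, Real.norm_eq_abs,
      abs_of_nonneg (Real.rpow_nonneg (Nat.cast_nonneg n) _)]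
    exact mul_le_mul_of_nonneg_right (hM n hn) (Real.rpow_nonneg (Nat.cast_nonneg n) _)

end


section
variable {f : ℕ → ℂ} {m : ℕ} {C : ℝ}

lemma abel_bound (hC : 0 < C)
    (hCb : ∀ N : ℕ, 1 ≤ N → ‖∑ n ∈ Finset.Icc 1 N, f n‖ ≤ C)
    {s : ℝ} (hs : 1 < s)
    (hsum : Summable fun n : ℕ => f n * (((n : ℝ) ^ (-s) : ℝ) : ℂ)) :
    ‖∑' n : ℕ, f n * (((n : ℝ) ^ (-s) : ℝ) : ℂ)‖ ≤ 3 * C := by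
  classical
  set t : ℕ → ℝ := fun n => (n : ℝ) ^ (-s) with ht
  set g0 : ℕ → ℂ := fun n => if n = 0 then 0 else f n with hg0
  have hsneg : -s ≤ 0 := by linarith
  have ht0 : t 0 = 0 := by simp [ht]; exact Real.zero_rpow (by linarith)
  have ht1 : t 1 = 1 := by simp [ht]
  have htnonneg : ∀ j, 0 ≤ t j := fun j => Real.rpow_nonneg (Nat.cast_nonneg j) _
  have htle1 : ∀ j, t j ≤ 1 := by
    intro j
    rcases Nat.eq_zero_or_pos j with rfl | hj
    · rw [ht0]; norm_num
    · exact Real.rpow_le_one_of_one_le_of_nonpos (by exact_mod_cast hj) hsneg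
  have htmono : ∀ i : ℕ, 1 ≤ i → t (i + 1) ≤ t i := by
    intro i hi
    apply Real.rpow_le_rpow_of_nonpos (by exact_mod_cast hi) (by exact_mod_cast Nat.le_succ i) hsneg
  -- partial sums of g0 are bounded by C
  have hS : ∀ N : ℕ, ‖∑ i ∈ Finset.range N, g0 i‖ ≤ C := by
    intro N
    rcases Nat.lt_or_ge N 2 with hN | hN
    · interval_cases N <;> simp [hg0] <;> positivity
    · have hsplit : ∑ i ∈ Finset.range N, g0 i = ∑ i ∈ Finset.Icc 1 (N - 1), f i := by
        rw [Finset.range_eq_Ico, Finset.sum_eq_sum_Ico_succ_bot (by omega : 0 < N)]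
        have h0 : g0 0 = 0 := by simp [hg0]
        rw [h0, zero_add]
        have hIco : Finset.Ico 1 N = Finset.Icc 1 (N - 1) := by
          rw [← Finset.Ico_add_one_right_eq_Icc]
          congr 1
          omega
        rw [hIco]
        exact Finset.sum_congr rfl fun i hi => by
          have : i ≠ 0 := by
            have := Finset.mem_Icc.mp hi
            omega
          simp [hg0, this]
      rw [hsplit]
      exact hCb (N - 1) (by omega)
  -- sum of |t (i+1) - t i| is at most 2
  have hdelta : ∀ M : ℕ, ∑ i ∈ Finset.range M, |t (i + 1) - t i| ≤ 2 := by
    intro M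
    rcases Nat.eq_zero_or_pos M with rfl | hM
    · simp
    · rw [Finset.range_eq_Ico, Finset.sum_eq_sum_Ico_succ_bot hM]
      have h01 : |t (0 + 1) - t 0| = 1 := by
        rw [ht0, ht1]; norm_num
      rw [h01]
      have habs : ∀ i ∈ Finset.Ico 1 M, |t (i + 1) - t i| = t i - t (i + 1) := by
        intro i hi
        have hi1 : 1 ≤ i := (Finset.mem_Ico.mp hi).1
        rw [abs_sub_comm, abs_of_nonneg (by linarith [htmono i hi1])]
      rw [Finset.sum_congr rfl habs, Finset.sum_Ico_eq_sum_range]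
      have := Finset.sum_range_sub' (fun j => t (1 + j)) (M - 1)
      simp only [show ∀ i : ℕ, 1 + i + 1 = 1 + (i + 1) from fun i => by ring] at this ⊢
      rw [this]
      have := htnonneg (1 + (M - 1))
      have := ht1
      simp only [ht1.symm]
      linarith [htnonneg (1 + (M - 1)), ht1]
  -- Abel bound on partial sums
  have hpartial : ∀ N : ℕ, ‖∑ i ∈ Finset.range N, t i • g0 i‖ ≤ 3 * C := by
    intro N
    rw [Finset.sum_range_by_parts t g0 N]
    have h1 : ‖t (N - 1) • ∑ i ∈ Finset.range N, g0 i‖ ≤ C := by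
      rw [norm_smul, Real.norm_eq_abs, abs_of_nonneg (htnonneg _)]
      calc t (N - 1) * ‖∑ i ∈ Finset.range N, g0 i‖ ≤ 1 * C :=
            mul_le_mul (htle1 _) (hS N) (norm_nonneg _) zero_le_one
        _ = C := one_mul C
    have h2 : ‖∑ i ∈ Finset.range (N - 1), (t (i + 1) - t i) • ∑ j ∈ Finset.range (i + 1), g0 j‖
        ≤ 2 * C := by
      calc ‖∑ i ∈ Finset.range (N - 1), (t (i + 1) - t i) • ∑ j ∈ Finset.range (i + 1), g0 j‖
          ≤ ∑ i ∈ Finset.range (N - 1), ‖(t (i + 1) - t i) • ∑ j ∈ Finset.range (i + 1), g0 j‖ :=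
            norm_sum_le _ _
        _ ≤ ∑ i ∈ Finset.range (N - 1), |t (i + 1) - t i| * C := by
            apply Finset.sum_le_sum
            intro i _
            rw [norm_smul, Real.norm_eq_abs]
            exact mul_le_mul_of_nonneg_left (hS _) (abs_nonneg _)
        _ = (∑ i ∈ Finset.range (N - 1), |t (i + 1) - t i|) * C := by
            rw [Finset.sum_mul]
        _ ≤ 2 * C := mul_le_mul_of_nonneg_right (hdelta _) hC.le
    calc ‖t (N - 1) • ∑ i ∈ Finset.range N, g0 i -
          ∑ i ∈ Finset.range (N - 1), (t (i + 1) - t i) • ∑ j ∈ Finset.range (i + 1), g0 j‖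
        ≤ _ + _ := norm_sub_le _ _
      _ ≤ C + 2 * C := add_le_add h1 h2
      _ = 3 * C := by ring
  -- identify terms
  have hterm : ∀ n : ℕ, f n * ((t n : ℝ) : ℂ) = t n • g0 n := by
    intro n
    rcases Nat.eq_zero_or_pos n with rfl | hn
    · simp [ht0, hg0]
    · have : n ≠ 0 := by omega
      simp [hg0, this, Complex.real_smul, mul_comm]
  have htend := hsum.hasSum.tendsto_sum_nat
  rw [tsum_congr hterm] at htend ⊢
  replace htend : Filter.Tendsto (fun N => ∑ i ∈ Finset.range N, t i • g0 i) Filter.atTop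
      (nhds (∑' n, t n • g0 n)) :=
    htend.congr fun N => Finset.sum_congr rfl fun i _ => hterm i
  refine le_of_tendsto htend.norm (Filter.Eventually.of_forall ?_)
  intro N
  exact hpartial N

end


open Filter Topology

lemma summable_pow_mul {c : ℕ → ℂ} {a : ℕ} (hc : ∀ k, a ≤ k → c k = c a)
    {x : ℂ} (hx : ‖x‖ < 1) : Summable fun k => c k * x ^ k := by
  have hM : ∃ M : ℝ, ∀ k, ‖c k‖ ≤ M := by
    refine ⟨(∑ j ∈ Finset.range (a + 1), ‖c j‖) + 1, fun k => ?_⟩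
    rcases Nat.lt_or_ge k (a + 1) with h | h
    · have := Finset.single_le_sum (f := fun j => ‖c j‖)
        (fun i _ => norm_nonneg _) (Finset.mem_range.mpr h)
      linarith
    · rw [hc k (by omega)]
      have := Finset.single_le_sum (f := fun j => ‖c j‖)
        (fun i _ => norm_nonneg _) (Finset.mem_range.mpr (Nat.lt_succ_self a))
      linarith
  obtain ⟨M, hM⟩ := hM
  apply Summable.of_norm
  refine Summable.of_nonneg_of_le (fun k => norm_nonneg _)
    (f := fun k => M * ‖x‖ ^ k) ?_ ((summable_geometric_of_lt_one (norm_nonneg x) hx).mul_left M)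
  intro k
  rw [norm_mul, norm_pow]
  exact mul_le_mul_of_nonneg_right (hM k) (pow_nonneg (norm_nonneg x) k)

lemma tsum_eventually_const {c : ℕ → ℂ} {a : ℕ} (hc : ∀ k, a ≤ k → c k = c a)
    {x : ℂ} (hx : ‖x‖ < 1) :
    ∑' k, c k * x ^ k =
      ∑ k ∈ Finset.range a, c k * x ^ k + c a * x ^ a * (1 - x)⁻¹ := by
  have hsum := summable_pow_mul hc hx
  rw [← Summable.sum_add_tsum_nat_add a hsum]
  congr 1
  have h1 : ∀ k : ℕ, c (k + a) * x ^ (k + a) = c a * x ^ a * x ^ k := by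
    intro k
    rw [hc (k + a) (by omega), pow_add]
    ring
  rw [tsum_congr h1, tsum_mul_left, tsum_geometric_of_norm_lt_one hx]

lemma Fq_closed_eq (q : ℕ) (hq : 2 ≤ q) {c : ℕ → ℂ} {a : ℕ}
    (hc : ∀ k, a ≤ k → c k = c a) :
    Filter.Tendsto (fun s : ℝ => ∑' k : ℕ, c k * ((((q ^ k : ℕ) : ℝ) ^ (-s) : ℝ) : ℂ))
      (𝓝[>] (1 : ℝ)) (𝓝 (∑' k : ℕ, c k / (q : ℂ) ^ k)) := by
  have hq0 : (0 : ℝ) < q := by positivity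
  have hq1 : (1 : ℝ) < q := by exact_mod_cast hq
  set P : ℂ → ℂ := fun x => ∑ k ∈ Finset.range a, c k * x ^ k + c a * x ^ a * (1 - x)⁻¹
    with hP
  have hval : ∀ s : ℝ, 0 < s →
      (∑' k : ℕ, c k * ((((q ^ k : ℕ) : ℝ) ^ (-s) : ℝ) : ℂ))
        = P ((((q : ℝ) ^ (-s) : ℝ)) : ℂ) := by
    intro s hs
    have hxlt : ‖((((q : ℝ) ^ (-s) : ℝ)) : ℂ)‖ < 1 := by
      rw [Complex.norm_real, Real.norm_eq_abs,
        abs_of_nonneg (Real.rpow_nonneg hq0.le _)]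
      exact Real.rpow_lt_one_of_one_lt_of_neg hq1 (by linarith)
    simp only [hP]
    rw [← tsum_eventually_const hc hxlt]
    apply tsum_congr
    intro k
    congr 1
    rw [← Complex.ofReal_pow]
    congr 1
    push_cast
    rw [← Real.rpow_natCast ((q : ℝ)) k, ← Real.rpow_natCast ((q : ℝ) ^ (-s)) k,
      ← Real.rpow_mul hq0.le, ← Real.rpow_mul hq0.le, mul_comm]
  have htarget : (∑' k : ℕ, c k / (q : ℂ) ^ k) = P ((q : ℂ)⁻¹) := by
    have hxlt : ‖((q : ℂ)⁻¹)‖ < 1 := by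
      rw [norm_inv]
      have : (1:ℝ) < ‖(q : ℂ)‖ := by
        rw [Complex.norm_natCast]; exact_mod_cast hq
      rw [inv_lt_one_iff₀]
      right; exact this
    simp only [hP]
    rw [← tsum_eventually_const hc hxlt]
    apply tsum_congr
    intro k
    rw [div_eq_mul_inv, inv_pow]
  have hne : (1 : ℂ) - (q : ℂ)⁻¹ ≠ 0 := by
    intro h
    have : (q : ℂ)⁻¹ = 1 := by linear_combination -h
    have hq1' : (q : ℂ) = 1 := by
      field_simp at this
      simpa using this.symm
    have : (q : ℕ) = 1 := by exact_mod_cast hq1'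
    omega
  have hcont : ContinuousAt P ((q : ℂ)⁻¹) := by
    apply ContinuousAt.add
    · exact (continuous_finset_sum _ fun k _ =>
        continuous_const.mul (continuous_pow k)).continuousAt
    · exact ((continuous_const.mul (continuous_pow a)).continuousAt).mul
        (((continuous_const.sub continuous_id).continuousAt).inv₀ hne)
  have hx : Filter.Tendsto (fun s : ℝ => ((((q : ℝ) ^ (-s) : ℝ)) : ℂ)) (𝓝[>] (1:ℝ))
      (𝓝 ((q : ℂ)⁻¹)) := by
    have h1 : ContinuousAt (fun s : ℝ => (q : ℝ) ^ (-s)) 1 := by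
      have := (Real.continuousAt_const_rpow (a := (q:ℝ)) (b := (-1 : ℝ)) (by positivity))
      exact this.comp (continuous_neg.continuousAt)
    have h2 : ((q : ℝ) ^ (-(1:ℝ)) : ℝ) = (q : ℝ)⁻¹ := by
      rw [Real.rpow_neg_one]
    have h3 : ContinuousAt (fun s : ℝ => ((((q : ℝ) ^ (-s) : ℝ)) : ℂ)) 1 :=
      Complex.continuous_ofReal.continuousAt.comp h1
    have h4 := h3.tendsto
    rw [show ((((q : ℝ) ^ (-(1:ℝ)) : ℝ)) : ℂ) = (q : ℂ)⁻¹ by rw [h2]; push_cast; ring] at h4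
    exact h4.mono_left nhdsWithin_le_nhds
  have := (hcont.tendsto.comp hx)
  rw [htarget]
  apply Filter.Tendsto.congr' _ this
  filter_upwards [self_mem_nhdsWithin] with s hs
  exact (hval s (by exact lt_trans one_pos hs)).symm


open Filter Topology

lemma summable_coeff' {s : ℝ} (hs : 1 < s) : Summable fun n : ℕ => (n : ℝ) ^ (-s) := by
  have h : ∀ n : ℕ, (n : ℝ) ^ (-s) = ((n : ℝ) ^ s)⁻¹ := fun n =>
    Real.rpow_neg (Nat.cast_nonneg n) s
  simpa only [h] using Real.summable_nat_rpow_inv.mpr hs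

lemma harmonic_shift_unbounded (m : ℕ) (hm : 1 ≤ m) (B : ℝ) :
    ∃ N : ℕ, B < ∑ j ∈ Finset.range N, (((j + 1) * m + 1 : ℕ) : ℝ)⁻¹ := by
  by_contra h
  push_neg at h
  have hsum : Summable fun j : ℕ => (((j + 1) * m + 1 : ℕ) : ℝ)⁻¹ :=
    summable_of_sum_range_le (fun n => by positivity) h
  have hcomp : ∀ j : ℕ, (1 / (2 * m) : ℝ) * ((j + 1 : ℕ) : ℝ)⁻¹
      ≤ (((j + 1) * m + 1 : ℕ) : ℝ)⁻¹ := by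
    intro j
    have ha : (0:ℝ) < (((j + 1) * m + 1 : ℕ) : ℝ) := by positivity
    have hb : (((j + 1) * m + 1 : ℕ) : ℝ) ≤ (2 * m) * ((j + 1 : ℕ) : ℝ) := by
      push_cast
      nlinarith [Nat.cast_nonneg (α := ℝ) j, (by exact_mod_cast hm : (1:ℝ) ≤ (m:ℝ))]
    have hc : ((2 * m) * ((j + 1 : ℕ) : ℝ))⁻¹ ≤ (((j + 1) * m + 1 : ℕ) : ℝ)⁻¹ :=
      inv_anti₀ ha hb
    calc (1 / (2 * m) : ℝ) * ((j + 1 : ℕ) : ℝ)⁻¹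
        = ((2 * m) * ((j + 1 : ℕ) : ℝ))⁻¹ := by
          rw [mul_inv, one_div]
      _ ≤ _ := hc
  have h2 : Summable fun j : ℕ => (1 / (2 * m) : ℝ) * ((j + 1 : ℕ) : ℝ)⁻¹ :=
    Summable.of_nonneg_of_le (fun j => by positivity) hcomp hsum
  have h3 : Summable fun j : ℕ => ((j + 1 : ℕ) : ℝ)⁻¹ := by
    have hne : (1 / (2 * m) : ℝ) ≠ 0 := by positivity
    exact (summable_mul_left_iff hne).mp h2
  have h4 : ¬ Summable fun j : ℕ => ((j + 1 : ℕ) : ℝ)⁻¹ := by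
    intro h'
    apply Real.not_summable_one_div_natCast
    have := (summable_nat_add_iff (f := fun n : ℕ => (n : ℝ)⁻¹) 1).mp (by
      simpa using h')
    simpa [one_div] using this
  exact h4 h3

lemma coprime_tail_divergence (m : ℕ) (hm : 2 ≤ m) :
    Tendsto (fun s : ℝ => ∑' n : ℕ,
        if ∃ q ∈ m.primeFactors, q ∣ n then (0:ℝ) else (n : ℝ) ^ (-s))
      (𝓝[>] (1 : ℝ)) atTop := by
  classical
  set u : ℝ → ℕ → ℝ := fun s n =>
    if ∃ q ∈ m.primeFactors, q ∣ n then (0:ℝ) else (n : ℝ) ^ (-s) with hu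
  have hunn : ∀ s : ℝ, ∀ n, 0 ≤ u s n := by
    intro s n
    by_cases h : ∃ q ∈ m.primeFactors, q ∣ n
    · simp only [hu]
      rw [if_pos h]
    · simp only [hu]
      rw [if_neg h]
      positivity
  have husum : ∀ s : ℝ, 1 < s → Summable (u s) := by
    intro s hs
    refine Summable.of_nonneg_of_le (hunn s) ?_ (summable_coeff' hs)
    intro n
    by_cases h : ∃ q ∈ m.primeFactors, q ∣ n
    · simp only [hu]
      rw [if_pos h]
      positivity
    · simp only [hu]
      rw [if_neg h]
  have hval : ∀ s : ℝ, ∀ j : ℕ, u s ((j + 1) * m + 1) = (((j + 1) * m + 1 : ℕ) : ℝ) ^ (-s) := by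
    intro s j
    have hnot : ¬ ∃ q ∈ m.primeFactors, q ∣ (j + 1) * m + 1 := by
      rintro ⟨q, hq, hdvd⟩
      have hqm : q ∣ m := Nat.dvd_of_mem_primeFactors hq
      have hq1 : q ∣ 1 := (Nat.dvd_add_right (hqm.mul_left (j+1))).mp hdvd
      exact (Nat.prime_of_mem_primeFactors hq).ne_one (Nat.dvd_one.mp hq1)
    simp only [hu]
    rw [if_neg hnot]
  have hlow : ∀ s : ℝ, 1 < s → ∀ N : ℕ,
      (∑ j ∈ Finset.range N, (((j + 1) * m + 1 : ℕ) : ℝ) ^ (-s)) ≤ ∑' n, u s n := by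
    intro s hs N
    have hinj : Set.InjOn (fun j => (j + 1) * m + 1) (Finset.range N) := by
      intro a _ b _ hab
      simp only at hab
      have hm0 : 0 < m := by omega
      nlinarith [hab]
    calc (∑ j ∈ Finset.range N, (((j + 1) * m + 1 : ℕ) : ℝ) ^ (-s))
        = ∑ j ∈ Finset.range N, u s ((j + 1) * m + 1) := by
          exact Finset.sum_congr rfl fun j _ => (hval s j).symm
      _ = ∑ n ∈ (Finset.range N).image (fun j => (j + 1) * m + 1), u s n :=
          (Finset.sum_image (fun a ha b hb => hinj ha hb)).symm
      _ ≤ ∑' n, u s n := Summable.sum_le_tsum _ (fun n _ => hunn s n) (husum s hs)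
  rw [tendsto_atTop]
  intro B
  obtain ⟨N, hN⟩ := harmonic_shift_unbounded m (by omega) (B + 1)
  have hcont : ContinuousAt
      (fun s : ℝ => ∑ j ∈ Finset.range N, (((j + 1) * m + 1 : ℕ) : ℝ) ^ (-s)) 1 := by
    have hco : Continuous (fun s : ℝ => ∑ j ∈ Finset.range N,
        (((j + 1) * m + 1 : ℕ) : ℝ) ^ (-s)) := by
      apply continuous_finset_sum
      intro j _
      have hb : (((j + 1) * m + 1 : ℕ) : ℝ) ≠ 0 := by positivity
      exact continuous_iff_continuousAt.mpr fun x =>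
        (Real.continuousAt_const_rpow hb).comp continuous_neg.continuousAt
    exact hco.continuousAt
  have hat1 : (∑ j ∈ Finset.range N, (((j + 1) * m + 1 : ℕ) : ℝ) ^ (-(1:ℝ)))
      = ∑ j ∈ Finset.range N, (((j + 1) * m + 1 : ℕ) : ℝ)⁻¹ := by
    exact Finset.sum_congr rfl fun j _ => Real.rpow_neg_one _
  have hev : ∀ᶠ s : ℝ in 𝓝 (1:ℝ),
      B < ∑ j ∈ Finset.range N, (((j + 1) * m + 1 : ℕ) : ℝ) ^ (-s) := by
    have : Set.Ioi B ∈ 𝓝 (∑ j ∈ Finset.range N, (((j + 1) * m + 1 : ℕ) : ℝ) ^ (-(1:ℝ))) := by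
      apply Ioi_mem_nhds
      rw [hat1]
      linarith
    exact hcont.tendsto this
  filter_upwards [hev.filter_mono nhdsWithin_le_nhds, self_mem_nhdsWithin] with s h1 h2
  exact le_trans h1.le (hlow s h2 N)
open Filter Topology in
theorem stmt_1 (f : ℕ → ℂ) (m : ℕ) (hm : 1 ≤ m)
    (hmul : IsMultiplicativeFn f)
    (hper : ∀ n : ℕ, 1 ≤ n → f (n + m) = f n)
    (hfm : f m ≠ 0)
    (hbdd : HasBoundedPartialSums f) :
    (∃ q : ℕ, q.Prime ∧ q ∣ m ∧ ∑' k : ℕ, f (q ^ k) / (q : ℂ) ^ k = 0) ∧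
    (∀ p a : ℕ, p.Prime → p ^ a ∣ m → ¬ p ^ (a + 1) ∣ m →
      ∀ k : ℕ, a ≤ k → f (p ^ k) = f (p ^ a)) ∧
    (∀ p : ℕ, p.Prime → Nat.Coprime p m → ∀ k : ℕ, 1 ≤ k → f (p ^ k) = 1) := by
  obtain ⟨C, hC, hCb⟩ := hbdd
  refine ⟨?_, part_ii hm hmul hper hfm, part_iii hm hmul hper hfm⟩
  by_contra hcon
  push_neg at hcon
  -- rule out m = 1
  rcases Nat.lt_or_ge m 2 with hm1 | hm2
  · have hmeq : m = 1 := by omega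
    subst hmeq
    have hone : ∀ n : ℕ, 1 ≤ n → f n = 1 := fun n hn =>
      f_cop le_rfl hmul hper hfm n hn (Nat.coprime_one_right n)
    set N : ℕ := ⌈C⌉₊ + 1 with hN
    have hsum : ∑ n ∈ Finset.Icc 1 N, f n = (N : ℂ) := by
      rw [Finset.sum_congr rfl fun n hn => hone n (Finset.mem_Icc.mp hn).1]
      simp [Nat.card_Icc]
    have := hCb N (by omega)
    rw [hsum] at this
    rw [Complex.norm_natCast] at this
    have hlt : C < (N : ℝ) := by
      have h1 : C ≤ (⌈C⌉₊ : ℝ) := Nat.le_ceil C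
      have h2 : ((⌈C⌉₊ : ℕ) : ℝ) < (N : ℝ) := by exact_mod_cast Nat.lt_succ_self _
      linarith
    linarith
  -- main case : m ≥ 2
  have hm0 : m ≠ 0 := by omega
  set Q : Finset ℕ := m.primeFactors with hQdef
  have hQprime : ∀ q ∈ Q, q.Prime := fun q hq => Nat.prime_of_mem_primeFactors hq
  have hQdvd : ∀ q ∈ Q, q ∣ m := fun q hq => Nat.dvd_of_mem_primeFactors hq
  have hQne : Q.Nonempty := Nat.nonempty_primeFactors.mpr (by omega)
  set E : ℕ → ℂ := fun q => ∑' k : ℕ, f (q ^ k) / (q : ℂ) ^ k with hEdef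
  have hEne : ∀ q ∈ Q, E q ≠ 0 := fun q hq => hcon q (hQprime q hq) (hQdvd q hq)
  have hZ : (∏ q ∈ Q, E q) ≠ 0 := Finset.prod_ne_zero_iff.mpr hEne
  -- the Dirichlet-type series
  set g : ℝ → ℕ → ℂ := fun s n => f n * (((n : ℝ) ^ (-s) : ℝ) : ℂ) with hgdef
  have hgs : ∀ s : ℝ, 1 < s → Summable fun n => ‖g s n‖ := fun s hs =>
    summable_g hm hper hs
  have hg0 : ∀ s : ℝ, 1 < s → g s 0 = 0 := by
    intro s hs
    simp only [hgdef, Nat.cast_zero]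
    rw [Real.zero_rpow (by linarith : -s ≠ 0)]
    simp
  have hgm : ∀ s : ℝ, ∀ a b : ℕ, Nat.Coprime a b → g s (a * b) = g s a * g s b := by
    intro s a b hab
    simp only [hgdef]
    rw [hmul.2 a b hab]
    have hr : ((a * b : ℕ) : ℝ) ^ (-s) = ((a : ℕ) : ℝ) ^ (-s) * ((b : ℕ) : ℝ) ^ (-s) := by
      push_cast
      exact Real.mul_rpow (Nat.cast_nonneg a) (Nat.cast_nonneg b)
    rw [hr]
    push_cast
    ring
  -- Euler-type factorization
  have hfactor : ∀ s : ℝ, 1 < s → ∑' n, g s n =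
      (∏ q ∈ Q, ∑' k : ℕ, g s (q ^ k)) *
        (∑' n, if ∃ q ∈ Q, q ∣ n then 0 else g s n) := fun s hs =>
    extract_primes Q hQprime (g s) (hgs s hs) (hg0 s hs) (hgm s)
  -- identify the coprime part with a real sum
  set u : ℝ → ℕ → ℝ := fun s n =>
    if ∃ q ∈ Q, q ∣ n then (0:ℝ) else (n : ℝ) ^ (-s) with hudef
  have hcopr : ∀ n : ℕ, 1 ≤ n → ¬ (∃ q ∈ Q, q ∣ n) → f n = 1 := by
    intro n hn hno
    apply f_cop hm hmul hper hfm n hn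
    by_contra hnc
    obtain ⟨p, hp, hpn, hpm⟩ := Nat.Prime.not_coprime_iff_dvd.mp hnc
    exact hno ⟨p, Nat.mem_primeFactors.mpr ⟨hp, hpm, hm0⟩, hpn⟩
  have hiden : ∀ s : ℝ, 1 < s →
      (∑' n, if ∃ q ∈ Q, q ∣ n then 0 else g s n) = ((∑' n, u s n : ℝ) : ℂ) := by
    intro s hs
    rw [Complex.ofReal_tsum]
    apply tsum_congr
    intro n
    by_cases h : ∃ q ∈ Q, q ∣ n
    · simp only [hudef]
      rw [if_pos h, if_pos h]
      simp
    · rcases Nat.eq_zero_or_pos n with rfl | hn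
      · exfalso
        obtain ⟨q, hq⟩ := hQne
        exact h ⟨q, hq, dvd_zero q⟩
      · simp only [hudef, hgdef]
        rw [if_neg h, if_neg h, hcopr n hn h, one_mul]
  -- the tendsto statements
  have hql : ∀ q ∈ Q, Tendsto (fun s : ℝ => ∑' k : ℕ, g s (q ^ k))
      (𝓝[>] (1:ℝ)) (𝓝 (E q)) := by
    intro q hq
    have hqp := hQprime q hq
    have ha1 : q ^ (m.factorization q) ∣ m := Nat.ordProj_dvd m q
    have ha2 : ¬ q ^ (m.factorization q + 1) ∣ m :=
      Nat.pow_succ_factorization_not_dvd hm0 hqp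
    have hc : ∀ k, m.factorization q ≤ k → f (q ^ k) = f (q ^ (m.factorization q)) :=
      fun k hk => part_ii hm hmul hper hfm q (m.factorization q) hqp ha1 ha2 k hk
    have := Fq_closed_eq q hqp.two_le (c := fun k => f (q ^ k)) (a := m.factorization q) hc
    exact this
  have hprodt : Tendsto (fun s : ℝ => ∏ q ∈ Q, ∑' k : ℕ, g s (q ^ k))
      (𝓝[>] (1:ℝ)) (𝓝 (∏ q ∈ Q, E q)) := tendsto_finset_prod Q hql
  have hnormt : Tendsto (fun s : ℝ => ‖∏ q ∈ Q, ∑' k : ℕ, g s (q ^ k)‖)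
      (𝓝[>] (1:ℝ)) (𝓝 ‖∏ q ∈ Q, E q‖) := hprodt.norm
  have hHdiv : Tendsto (fun s : ℝ => ∑' n, u s n) (𝓝[>] (1:ℝ)) atTop := by
    have := coprime_tail_divergence m hm2
    exact this
  have hDt : Tendsto (fun s : ℝ => ‖∑' n, g s n‖) (𝓝[>] (1:ℝ)) atTop := by
    have hmul_t : Tendsto
        (fun s : ℝ => ‖∏ q ∈ Q, ∑' k : ℕ, g s (q ^ k)‖ * ∑' n, u s n)
        (𝓝[>] (1:ℝ)) atTop :=
      Filter.Tendsto.pos_mul_atTop (norm_pos_iff.mpr hZ) hnormt hHdiv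
    apply hmul_t.congr'
    filter_upwards [self_mem_nhdsWithin] with s hs
    have hs1 : (1:ℝ) < s := hs
    have hunn : 0 ≤ ∑' n, u s n := by
      apply tsum_nonneg
      intro n
      by_cases h : ∃ q ∈ Q, q ∣ n
      · simp only [hudef]; rw [if_pos h]
      · simp only [hudef]; rw [if_neg h]; positivity
    rw [hfactor s hs1, hiden s hs1, norm_mul, Complex.norm_real,
      Real.norm_eq_abs, abs_of_nonneg hunn]
  have hbound : ∀ᶠ s : ℝ in 𝓝[>] (1:ℝ), ‖∑' n, g s n‖ ≤ 3 * C := by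
    filter_upwards [self_mem_nhdsWithin] with s hs
    exact abel_bound hC hCb hs ((hgs s hs).of_norm)
  have hgt := hDt.eventually_gt_atTop (3 * C)
  obtain ⟨s, hs1, hs2⟩ := (hgt.and hbound).exists
  linarith
end

section
/- Let f : ℕ → ℂ be multiplicative and let m ≥ 1 be an integer such that: (i) for some prime q dividing m, ∑_{k=0}^∞ f(q^k)/q^k = 0; (ii) for each prime power p^a exactly dividing m, f(p^k) = f(p^a) for all k ≥ a; (iii) for each prime p with gcd(p,m) = 1, f(p^k) = 1 for all k ≥ 1. Then f has period m and has bounded partial sums. -/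
open Finset

lemma aux_min_fac (p M n a : ℕ) (pp : p.Prime) (hM : M ≠ 0) (hn : n ≠ 0)
    (ha : a ≤ M.factorization p) :
    min ((n + M).factorization p) a = min (n.factorization p) a := by
  have hnM : n + M ≠ 0 := by omega
  by_cases h : a ≤ n.factorization p
  · have h1 : p ^ a ∣ n := (Nat.Prime.pow_dvd_iff_le_factorization pp hn).2 h
    have h2 : p ^ a ∣ M := (Nat.Prime.pow_dvd_iff_le_factorization pp hM).2 ha
    have h3 : p ^ a ∣ n + M := dvd_add h1 h2
    have h4 : a ≤ (n + M).factorization p :=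
      (Nat.Prime.pow_dvd_iff_le_factorization pp hnM).1 h3
    omega
  · push_neg at h
    set v := n.factorization p with hv
    have h1 : p ^ v ∣ n := (Nat.Prime.pow_dvd_iff_le_factorization pp hn).2 le_rfl
    have h2 : ¬ p ^ (v + 1) ∣ n := by
      intro hd
      have := (Nat.Prime.pow_dvd_iff_le_factorization pp hn).1 hd
      omega
    have h3 : p ^ (v + 1) ∣ M :=
      (Nat.Prime.pow_dvd_iff_le_factorization pp hM).2 (by omega)
    have h4 : p ^ v ∣ n + M := dvd_add h1 (dvd_trans (pow_dvd_pow p (by omega)) h3)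
    have h5 : ¬ p ^ (v + 1) ∣ n + M := by
      intro hd
      have hd' : p ^ (v + 1) ∣ M + n := by rwa [Nat.add_comm n M] at hd
      exact h2 ((Nat.dvd_add_right h3).mp hd')
    have h6 : v ≤ (n + M).factorization p :=
      (Nat.Prime.pow_dvd_iff_le_factorization pp hnM).1 h4
    have h7 : ¬ (v + 1 ≤ (n + M).factorization p) := fun hle =>
      h5 ((Nat.Prime.pow_dvd_iff_le_factorization pp hnM).2 hle)
    omega

lemma sum_Icc_zmod (M : ℕ) [NeZero M] (φ : ZMod M → ℂ) :
    ∑ n ∈ Finset.Icc 1 M, φ (n : ZMod M) = ∑ x : ZMod M, φ x := by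
  have hM : 1 ≤ M := Nat.one_le_iff_ne_zero.mpr (NeZero.ne M)
  refine Finset.sum_nbij' (i := fun n => (n : ZMod M))
    (j := fun x => if x.val = 0 then M else x.val) ?_ ?_ ?_ ?_ ?_
  · intro n _; exact Finset.mem_univ _
  · intro x _
    simp only [Finset.mem_Icc]
    have := ZMod.val_lt x
    split <;> omega
  · intro n hn
    simp only [Finset.mem_Icc] at hn
    rw [ZMod.val_natCast]
    rcases eq_or_lt_of_le hn.2 with h | h
    · subst h; simp
    · rw [Nat.mod_eq_of_lt h]
      have : n ≠ 0 := by omega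
      simp [this]
  · intro x _
    split
    · rename_i h
      rw [ZMod.natCast_self]
      exact ((ZMod.val_eq_zero x).mp h).symm
    · exact ZMod.natCast_rightInverse x
  · intro n _; rfl

lemma periodic_mod (g : ℕ → ℂ) (A : ℕ) (hA : 1 ≤ A)
    (hg : ∀ n, 1 ≤ n → g (n + A) = g n) (n : ℕ) (hn : 1 ≤ n) :
    g n = g (n % A + A) := by
  have key : ∀ k n, 1 ≤ n → g (n + k * A) = g n := by
    intro k
    induction k with
    | zero => intro n _; simp
    | succ k ih =>
      intro n hn
      have : n + (k+1) * A = (n + k * A) + A := by ring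
      rw [this, hg _ (by omega), ih n hn]
  rcases Nat.eq_zero_or_pos (n % A) with h | h
  · -- n is a multiple of A, n ≥ 1 so n/A ≥ 1
    have hd : A ∣ n := Nat.dvd_of_mod_eq_zero h
    obtain ⟨c, rfl⟩ := hd
    have hc : 1 ≤ c := by
      rcases Nat.eq_zero_or_pos c with rfl | h'
      · simp at hn
      · exact h'
    rw [h]
    obtain ⟨d, rfl⟩ : ∃ d, c = d + 1 := ⟨c - 1, by omega⟩
    have : A * (d + 1) = A + d * A := by ring
    rw [this, key d A hA, zero_add]
  · conv_lhs => rw [← Nat.mod_add_div n A]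
    rw [show n % A + A * (n / A) = n % A + (n / A) * A by ring, key _ _ h,
      hg _ h]

lemma crt_sum (A B : ℕ) (hA : 1 ≤ A) (hB : 1 ≤ B) (hAB : Nat.Coprime A B)
    (g h : ℕ → ℂ) (hg : ∀ n, 1 ≤ n → g (n + A) = g n)
    (hh : ∀ n, 1 ≤ n → h (n + B) = h n) :
    ∑ n ∈ Finset.Icc 1 (A * B), g n * h n
      = (∑ n ∈ Finset.Icc 1 A, g n) * (∑ n ∈ Finset.Icc 1 B, h n) := by
  haveI : NeZero A := ⟨by omega⟩
  haveI : NeZero B := ⟨by omega⟩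
  haveI : NeZero (A * B) := ⟨by positivity⟩
  set G : ZMod A → ℂ := fun x => g (x.val + A) with hG
  set H : ZMod B → ℂ := fun y => h (y.val + B) with hH
  have hGg : ∀ n, 1 ≤ n → g n = G (n : ZMod A) := by
    intro n hn
    rw [hG]; simp only [ZMod.val_natCast]
    exact periodic_mod g A hA hg n hn
  have hHh : ∀ n, 1 ≤ n → h n = H (n : ZMod B) := by
    intro n hn
    rw [hH]; simp only [ZMod.val_natCast]
    exact periodic_mod h B hB hh n hn
  have e := ZMod.chineseRemainder hAB
  have step1 : ∑ n ∈ Finset.Icc 1 (A * B), g n * h n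
      = ∑ z : ZMod (A * B), G (e z).1 * H (e z).2 := by
    rw [← sum_Icc_zmod (A * B) (fun z => G (e z).1 * H (e z).2)]
    apply Finset.sum_congr rfl
    intro n hn
    simp only [Finset.mem_Icc] at hn
    rw [hGg n hn.1, hHh n hn.1]
    congr 1
    · congr 1
      have : e (n : ZMod (A * B)) = ((n : ZMod A), (n : ZMod B)) := by
        rw [map_natCast e n]; rfl
      rw [this]
    · congr 1
      have : e (n : ZMod (A * B)) = ((n : ZMod A), (n : ZMod B)) := by
        rw [map_natCast e n]; rfl
      rw [this]
  rw [step1]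
  have step2 : ∑ z : ZMod (A * B), G (e z).1 * H (e z).2
      = ∑ w : ZMod A × ZMod B, G w.1 * H w.2 :=
    Fintype.sum_equiv e.toEquiv _ _ (fun z => rfl)
  rw [step2, Fintype.sum_prod_type]
  rw [← Finset.sum_mul_sum]
  rw [← sum_Icc_zmod A G, ← sum_Icc_zmod B H]
  congr 1
  · apply Finset.sum_congr rfl
    intro n hn
    simp only [Finset.mem_Icc] at hn
    exact (hGg n hn.1).symm
  · apply Finset.sum_congr rfl
    intro n hn
    simp only [Finset.mem_Icc] at hn
    exact (hHh n hn.1).symm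

lemma sum_Icc_multiples (q N : ℕ) (hq : 1 ≤ q) (F : ℕ → ℂ) :
    ∑ n ∈ (Icc 1 (q * N)).filter (fun n => q ∣ n), F n
      = ∑ s ∈ Icc 1 N, F (q * s) := by
  refine Finset.sum_nbij' (i := fun n => n / q) (j := fun s => q * s) ?_ ?_ ?_ ?_ ?_
  · intro n hn
    simp only [mem_filter, mem_Icc] at hn
    obtain ⟨⟨h1, h2⟩, c, rfl⟩ := hn
    simp only [mem_Icc]
    rw [Nat.mul_div_cancel_left c (by omega)]
    constructor
    · rcases Nat.eq_zero_or_pos c with rfl | h; · omega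
      · exact h
    · exact Nat.le_of_mul_le_mul_left h2 (by omega)
  · intro s hs
    simp only [mem_Icc] at hs
    simp only [mem_filter, mem_Icc]
    exact ⟨⟨by nlinarith, by nlinarith⟩, Dvd.intro s rfl⟩
  · intro n hn
    simp only [mem_filter, mem_Icc] at hn
    obtain ⟨⟨h1, h2⟩, c, rfl⟩ := hn
    rw [Nat.mul_div_cancel_left c (by omega)]
  · intro s hs
    rw [Nat.mul_div_cancel_left s (by omega)]
  · intro n hn
    simp only [mem_filter, mem_Icc] at hn
    obtain ⟨⟨h1, h2⟩, c, rfl⟩ := hn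
    rw [Nat.mul_div_cancel_left c (by omega)]

lemma card_Icc_multiples (q N : ℕ) (hq : 1 ≤ q) :
    ((Icc 1 (q * N)).filter (fun n => q ∣ n)).card = N := by
  have h := sum_Icc_multiples q N hq (fun _ => (1 : ℂ))
  simp only [Finset.sum_const, nsmul_eq_mul, mul_one] at h
  have h2 : (#(filter (fun n => q ∣ n) (Icc 1 (q * N))) : ℂ) = (N : ℂ) := by
    rw [h]; simp [Nat.card_Icc]
  exact_mod_cast h2

noncomputable def Tsum (f : ℕ → ℂ) (q b j : ℕ) : ℂ :=
  ∑ n ∈ Icc 1 (q ^ b), f (q ^ (j + min (n.factorization q) b))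

lemma Tsum_zero (f : ℕ → ℂ) (q j : ℕ) : Tsum f q 0 j = f (q ^ j) := by
  simp [Tsum]

lemma Tsum_succ (f : ℕ → ℂ) (q b j : ℕ) (hq : q.Prime) :
    Tsum f q (b + 1) j
      = ((q ^ (b + 1) - q ^ b : ℕ) : ℂ) * f (q ^ j) + Tsum f q b (j + 1) := by
  have hq1 : 1 ≤ q := hq.one_lt.le
  have hpow : q ^ (b + 1) = q * q ^ b := by ring
  have hA : ∑ n ∈ (Icc 1 (q ^ (b+1))).filter (fun n => q ∣ n),
      f (q ^ (j + min (n.factorization q) (b+1))) = Tsum f q b (j + 1) := by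
    rw [hpow, sum_Icc_multiples q (q ^ b) hq1]
    apply Finset.sum_congr rfl
    intro s hs
    simp only [mem_Icc] at hs
    have hs0 : s ≠ 0 := by omega
    have hfac : (q * s).factorization q = 1 + s.factorization q := by
      rw [Nat.factorization_mul (by omega) hs0]
      simp [hq.factorization]
    rw [hfac]
    congr 2
    omega
  have hB : ∑ n ∈ (Icc 1 (q ^ (b+1))).filter (fun n => ¬ q ∣ n),
      f (q ^ (j + min (n.factorization q) (b+1)))
      = ((q ^ (b + 1) - q ^ b : ℕ) : ℂ) * f (q ^ j) := by
    have hterm : ∀ n ∈ (Icc 1 (q ^ (b+1))).filter (fun n => ¬ q ∣ n),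
        f (q ^ (j + min (n.factorization q) (b+1))) = f (q ^ j) := by
      intro n hn
      simp only [mem_filter, mem_Icc] at hn
      rw [Nat.factorization_eq_zero_of_not_dvd hn.2]
      simp
    rw [Finset.sum_congr rfl hterm, Finset.sum_const, nsmul_eq_mul]
    congr 1
    have h1 := Finset.card_filter_add_card_filter_not
      (s := Icc 1 (q ^ (b+1))) (p := fun n => q ∣ n)
    rw [Nat.card_Icc] at h1
    have h2 : ((Icc 1 (q ^ (b+1))).filter (fun n => q ∣ n)).card = q ^ b := by
      rw [hpow]; exact card_Icc_multiples q (q ^ b) hq1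
    norm_cast
    omega
  rw [Tsum, ← Finset.sum_filter_add_sum_filter_not (Icc 1 (q ^ (b+1))) (fun n => q ∣ n),
    hA, hB, add_comm]

lemma Tsum_closed (f : ℕ → ℂ) (q : ℕ) (hq : q.Prime) (b : ℕ) : ∀ j,
    Tsum f q b j
      = (q : ℂ) ^ b * (1 - 1 / q) * (∑ i ∈ range b, f (q ^ (j + i)) / (q : ℂ) ^ i)
        + f (q ^ (j + b)) := by
  have hq0 : (q : ℂ) ≠ 0 := Nat.cast_ne_zero.mpr hq.pos.ne'
  induction b with
  | zero => intro j; simp [Tsum_zero]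
  | succ b ih =>
    intro j
    have hcast : ((q ^ (b + 1) - q ^ b : ℕ) : ℂ) = (q : ℂ) ^ (b + 1) - (q : ℂ) ^ b := by
      have h : q ^ b ≤ q ^ (b + 1) := Nat.pow_le_pow_right hq.pos (by omega)
      push_cast [Nat.cast_sub h]
      ring
    have hsum : (q:ℂ)^(b+1) * (1 - 1/(q:ℂ)) * (∑ i ∈ range (b+1), f (q^(j+i)) / (q:ℂ)^i)
        = ((q:ℂ)^(b+1) - (q:ℂ)^b) * f (q^j)
          + (q:ℂ)^b * (1 - 1/(q:ℂ)) * (∑ i ∈ range b, f (q^(j+1+i)) / (q:ℂ)^i) := by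
      rw [Finset.sum_range_succ']
      simp only [pow_zero, Nat.add_zero, div_one]
      rw [mul_add, add_comm]
      congr 1
      · field_simp
        ring
      · rw [Finset.mul_sum, Finset.mul_sum]
        apply Finset.sum_congr rfl
        intro i _
        have he : j + (i + 1) = j + 1 + i := by omega
        rw [he]
        have hqi : (q:ℂ)^i ≠ 0 := pow_ne_zero i hq0
        have hqi1 : (q:ℂ)^(i+1) ≠ 0 := pow_ne_zero _ hq0
        field_simp
        ring
    rw [Tsum_succ f q b j hq, ih (j + 1), hcast, hsum]
    have he2 : j + 1 + b = j + (b + 1) := by omega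
    rw [he2]
    ring

lemma Tsum_eq_zero (f : ℕ → ℂ) (q a : ℕ) (hq : q.Prime)
    (hstab : ∀ k, a ≤ k → f (q ^ k) = f (q ^ a))
    (htsum : ∑' k : ℕ, f (q ^ k) / (q : ℂ) ^ k = 0) :
    Tsum f q a 0 = 0 := by
  have hq2 : (2 : ℝ) ≤ q := by exact_mod_cast hq.two_le
  have hq0 : (q : ℂ) ≠ 0 := Nat.cast_ne_zero.mpr hq.pos.ne'
  have hnorm : ‖(1 / q : ℂ)‖ < 1 := by
    rw [norm_div, norm_one, Complex.norm_natCast]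
    rw [div_lt_one (by linarith)]
    linarith
  have hone : (1 : ℂ) - 1 / q ≠ 0 := by
    intro h
    have : (1 / q : ℂ) = 1 := by linear_combination -h
    rw [this] at hnorm
    simp at hnorm
  set g : ℕ → ℂ := fun k => f (q ^ k) / (q : ℂ) ^ k with hg
  have hgeq : ∀ k : ℕ, g (k + a) = f (q ^ a) * (1 / q : ℂ) ^ (k + a) := by
    intro k
    rw [hg]
    simp only []
    rw [hstab (k + a) (by omega)]
    rw [div_pow, one_pow]
    ring
  have hsum_geo : Summable (fun k : ℕ => (1 / q : ℂ) ^ k) :=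
    summable_geometric_of_norm_lt_one hnorm
  have hsum_tail : Summable (fun k : ℕ => g (k + a)) := by
    have : Summable (fun k : ℕ => f (q ^ a) * (1 / q : ℂ) ^ (k + a)) := by
      simp_rw [pow_add]
      apply Summable.mul_left
      exact hsum_geo.mul_right _
    exact this.congr (fun k => (hgeq k).symm)
  have hsummable : Summable g := (summable_nat_add_iff a).mp hsum_tail
  have hsplit := hsummable.sum_add_tsum_nat_add a
  rw [htsum] at hsplit
  have htail : ∑' k : ℕ, g (k + a) = f (q ^ a) * ((1 / q : ℂ) ^ a * ((1:ℂ) - 1 / (q:ℂ))⁻¹) := by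
    rw [tsum_congr hgeq]
    simp_rw [pow_add]
    rw [tsum_mul_left, tsum_mul_right, tsum_geometric_of_norm_lt_one hnorm]
    ring
  rw [htail] at hsplit
  -- hsplit : 0 = ∑ i ∈ range a, g i + f (q ^ a) * ((1/q)^a * (1 - 1/q)⁻¹)
  have hP : ∑ i ∈ range a, g i = - (f (q ^ a) * ((1 / q : ℂ) ^ a * ((1:ℂ) - 1 / (q:ℂ))⁻¹)) :=
    eq_neg_of_add_eq_zero_left hsplit
  rw [Tsum_closed f q hq a 0]
  simp only [Nat.zero_add]
  have : ∑ i ∈ range a, f (q ^ i) / (q : ℂ) ^ i = ∑ i ∈ range a, g i := rfl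
  rw [this, hP]
  have h1 : (1/(q:ℂ))^a = ((q:ℂ)^a)⁻¹ := by rw [one_div, inv_pow]
  rw [h1]
  have hqa : (q:ℂ)^a ≠ 0 := pow_ne_zero a hq0
  have hq1 : (q:ℂ) - 1 ≠ 0 := by
    intro h
    have h2 : (q:ℂ) = 1 := by linear_combination h
    have h3 : q = 1 := by exact_mod_cast h2
    have := hq.two_le
    omega
  field_simp
  ring
theorem stmt_2 (f : ℕ → ℂ) (m : ℕ) (hm : 1 ≤ m)
    (hmul : IsMultiplicativeFn f)
    (hi : ∃ q : ℕ, q.Prime ∧ q ∣ m ∧ ∑' k : ℕ, f (q ^ k) / (q : ℂ) ^ k = 0)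
    (hii : ∀ p a : ℕ, p.Prime → p ^ a ∣ m → ¬ p ^ (a + 1) ∣ m →
      ∀ k : ℕ, a ≤ k → f (p ^ k) = f (p ^ a))
    (hiii : ∀ p : ℕ, p.Prime → Nat.Coprime p m → ∀ k : ℕ, 1 ≤ k → f (p ^ k) = 1) :
    (∀ n : ℕ, 1 ≤ n → f (n + m) = f n) ∧ HasBoundedPartialSums f := by
  obtain ⟨hf1, hfm⟩ := hmul
  have hm0 : m ≠ 0 := by omega
  -- Step 1: representation formula
  have repr : ∀ n : ℕ, n ≠ 0 →
      f n = ∏ p ∈ m.primeFactors, f (p ^ min (n.factorization p) (m.factorization p)) := by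
    intro n hn
    rw [Nat.multiplicative_factorization f hfm hf1 hn]
    rw [Finsupp.prod]
    rw [Nat.support_factorization]
    have e1 : ∏ p ∈ n.primeFactors, f (p ^ n.factorization p)
        = ∏ p ∈ n.primeFactors ∪ m.primeFactors, f (p ^ n.factorization p) := by
      apply Finset.prod_subset Finset.subset_union_left
      intro p _ hnp
      rw [← Nat.support_factorization] at hnp
      rw [Finsupp.notMem_support_iff.mp hnp, pow_zero, hf1]
    have e2 : ∏ p ∈ m.primeFactors, f (p ^ min (n.factorization p) (m.factorization p))
        = ∏ p ∈ n.primeFactors ∪ m.primeFactors,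
            f (p ^ min (n.factorization p) (m.factorization p)) := by
      apply Finset.prod_subset Finset.subset_union_right
      intro p _ hnp
      rw [← Nat.support_factorization] at hnp
      rw [Finsupp.notMem_support_iff.mp hnp, Nat.min_zero, pow_zero, hf1]
    rw [e1, e2]
    apply Finset.prod_congr rfl
    intro p hp
    have pp : p.Prime := by
      rcases Finset.mem_union.mp hp with h | h
      · exact Nat.prime_of_mem_primeFactors h
      · exact Nat.prime_of_mem_primeFactors h
    by_cases hpm : p ∣ m
    · by_cases hle : n.factorization p ≤ m.factorization p
      · rw [min_eq_left hle]
      · push_neg at hle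
        rw [min_eq_right hle.le]
        exact hii p (m.factorization p) pp (Nat.ordProj_dvd m p)
          (Nat.pow_succ_factorization_not_dvd hm0 pp) _ hle.le
    · have hv : m.factorization p = 0 := Nat.factorization_eq_zero_of_not_dvd hpm
      rw [hv, Nat.min_zero, pow_zero, hf1]
      rcases Nat.eq_zero_or_pos (n.factorization p) with h0 | h0
      · rw [h0, pow_zero, hf1]
      · exact hiii p pp ((Nat.Prime.coprime_iff_not_dvd pp).mpr hpm) _ h0
  -- Step 2: periodicity
  have hper : ∀ n : ℕ, 1 ≤ n → f (n + m) = f n := by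
    intro n hn
    rw [repr (n + m) (by omega), repr n (by omega)]
    apply Finset.prod_congr rfl
    intro p hp
    have pp := Nat.prime_of_mem_primeFactors hp
    rw [aux_min_fac p m n (m.factorization p) pp hm0 (by omega) le_rfl]
  refine ⟨hper, ?_⟩
  -- Step 3: sum over a period is zero
  obtain ⟨q, hqp, hqm, htsum⟩ := hi
  set a := m.factorization q with ha
  have ha1 : 1 ≤ a := hqp.factorization_pos_of_dvd hm0 hqm
  set A := q ^ a with hA
  set B := m / A with hB
  have hABm : A * B = m := Nat.ordProj_mul_ordCompl_eq_self m q
  have hq2 : 2 ≤ q := hqp.two_le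
  have hA0 : A ≠ 0 := pow_ne_zero a (by omega)
  have hA1 : 1 ≤ A := by omega
  have hB1 : 1 ≤ B := Nat.ordCompl_pos q hm0
  have hB0 : B ≠ 0 := by omega
  have hcopqB : Nat.Coprime q B := Nat.coprime_ordCompl hqp hm0
  have hcopAB : Nat.Coprime A B := Nat.Coprime.pow_left a hcopqB
  have hqnB : q ∉ B.primeFactors := by
    intro h
    exact (hqp.coprime_iff_not_dvd.mp hcopqB) (Nat.dvd_of_mem_primeFactors h)
  have hmpf : m.primeFactors = insert q B.primeFactors := by
    rw [← hABm, Nat.primeFactors_mul hA0 hB0, hA, Nat.primeFactors_pow q (by omega),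
      hqp.primeFactors]
    ext x; simp
  set g : ℕ → ℂ := fun n => f (q ^ min (n.factorization q) a) with hg
  set h : ℕ → ℂ := fun n =>
    ∏ p ∈ B.primeFactors, f (p ^ min (n.factorization p) (m.factorization p)) with hh
  have hgh : ∀ n : ℕ, n ≠ 0 → f n = g n * h n := by
    intro n hn
    rw [repr n hn, hmpf, Finset.prod_insert hqnB]
  have hgper : ∀ n, 1 ≤ n → g (n + A) = g n := by
    intro n hn
    have hfacA : A.factorization q = a := by
      rw [hA, hqp.factorization_pow]
      simp
    rw [hg]
    simp only []
    rw [aux_min_fac q A n a hqp hA0 (by omega) (le_of_eq hfacA.symm)]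
  have hBfac : ∀ p ∈ B.primeFactors, m.factorization p = B.factorization p := by
    intro p hp
    have pp := Nat.prime_of_mem_primeFactors hp
    have hpq : p ≠ q := by
      intro hpq; rw [hpq] at hp; exact hqnB hp
    rw [← hABm, Nat.factorization_mul hA0 hB0]
    simp only [Finsupp.coe_add, Pi.add_apply]
    rw [hA, hqp.factorization_pow]
    simp [Finsupp.single_apply, (Ne.symm hpq)]
  have hhper : ∀ n, 1 ≤ n → h (n + B) = h n := by
    intro n hn
    rw [hh]
    simp only []
    apply Finset.prod_congr rfl
    intro p hp
    have pp := Nat.prime_of_mem_primeFactors hp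
    rw [aux_min_fac p B n (m.factorization p) pp hB0 (by omega) (le_of_eq (hBfac p hp))]
  have hgsum : ∑ n ∈ Finset.Icc 1 A, g n = 0 := by
    have hstab : ∀ k, a ≤ k → f (q ^ k) = f (q ^ a) := fun k hk =>
      hii q a hqp (Nat.ordProj_dvd m q) (Nat.pow_succ_factorization_not_dvd hm0 hqp) k hk
    have : ∑ n ∈ Finset.Icc 1 A, g n = Tsum f q a 0 := by
      rw [Tsum, hA]
      apply Finset.sum_congr rfl
      intro n _
      rw [hg]
      simp
    rw [this]
    exact Tsum_eq_zero f q a hqp hstab htsum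
  have hSzero : ∑ n ∈ Finset.Icc 1 m, f n = 0 := by
    rw [← hABm]
    have : ∑ n ∈ Finset.Icc 1 (A * B), f n = ∑ n ∈ Finset.Icc 1 (A * B), g n * h n := by
      apply Finset.sum_congr rfl
      intro n hn
      simp only [Finset.mem_Icc] at hn
      exact hgh n (by omega)
    rw [this, crt_sum A B hA1 hB1 hcopAB g h hgper hhper, hgsum, zero_mul]
  -- Step 4: bounded partial sums
  have hblock : ∀ s : ℕ, ∑ n ∈ Finset.Ioc s (s + m), f n = 0 := by
    intro s
    induction s with
    | zero =>
      rw [show Finset.Ioc 0 (0 + m) = Finset.Icc 1 m by rw [← Finset.Icc_add_one_left_eq_Ioc]; norm_num]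
      exact hSzero
    | succ s ih =>
      have h1 : Finset.Ioc s (s + m) = insert (s + 1) (Finset.Ioc (s + 1) (s + m)) := by
        ext x
        simp only [Finset.mem_Ioc, Finset.mem_insert]
        omega
      have h2 : Finset.Ioc (s + 1) (s + 1 + m) = insert (s + 1 + m) (Finset.Ioc (s + 1) (s + m)) := by
        ext x
        simp only [Finset.mem_Ioc, Finset.mem_insert]
        omega
      have hn1 : (s + 1) ∉ Finset.Ioc (s + 1) (s + m) := by simp
      have hn2 : (s + 1 + m) ∉ Finset.Ioc (s + 1) (s + m) := by
        simp only [Finset.mem_Ioc]; omega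
      rw [h1, Finset.sum_insert hn1] at ih
      rw [h2, Finset.sum_insert hn2]
      rw [hper (s + 1) (by omega)]
      linear_combination ih
  have hreduce : ∀ N : ℕ, m ≤ N →
      ∑ n ∈ Finset.Icc 1 N, f n = ∑ n ∈ Finset.Icc 1 (N - m), f n := by
    intro N hN
    have hsplit : ∑ n ∈ Finset.Ioc 0 N, f n
        = ∑ n ∈ Finset.Ioc 0 (N - m), f n + ∑ n ∈ Finset.Ioc (N - m) N, f n :=
      (Finset.sum_Ioc_consecutive f (by omega) (by omega)).symm
    have hIcc : ∀ x : ℕ, Finset.Icc 1 x = Finset.Ioc 0 x := fun x => by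
      rw [← Finset.Icc_add_one_left_eq_Ioc]; rfl
    have hend : Finset.Ioc (N - m) N = Finset.Ioc (N - m) ((N - m) + m) := by
      congr 1
      omega
    rw [hIcc, hIcc, hsplit, hend, hblock (N - m), add_zero]
  set C : ℝ := (∑ n ∈ Finset.Icc 1 m, ‖f n‖) + 1 with hC
  have hCpos : 0 < C := by
    rw [hC]
    have : 0 ≤ ∑ n ∈ Finset.Icc 1 m, ‖f n‖ :=
      Finset.sum_nonneg fun n _ => norm_nonneg _
    linarith
  refine ⟨C, hCpos, ?_⟩
  intro N _
  induction N using Nat.strong_induction_on with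
  | _ N ih =>
    by_cases hNm : N ≤ m
    · calc ‖∑ n ∈ Finset.Icc 1 N, f n‖ ≤ ∑ n ∈ Finset.Icc 1 N, ‖f n‖ :=
            norm_sum_le _ _
        _ ≤ ∑ n ∈ Finset.Icc 1 m, ‖f n‖ := by
            apply Finset.sum_le_sum_of_subset_of_nonneg
            · apply Finset.Icc_subset_Icc_right hNm
            · intro n _ _; exact norm_nonneg _
        _ ≤ C := by rw [hC]; linarith
    · push_neg at hNm
      rw [hreduce N (by omega)]
      exact ih (N - m) (by omega) (by omega)
end

section
/- Let f₁ and f₂ be multiplicative functions ℕ → ℂ such that, for j = 1,2, f_j satisfies with respect to an integer m_j ≥ 1 the conditions: (i) for some prime q dividing m_j, ∑_{k=0}^∞ f_j(q^k)/q^k = 0; (ii) for each prime power p^a exactly dividing m_j, f_j(p^k) = f_j(p^a) for all k ≥ a; (iii) for each prime p with gcd(p,m_j) = 1, f_j(p^k) = 1 for all k ≥ 1. Let f = f₁ ∗ f₂ be the Dirichlet convolution. Then there exists a constant d > 0 such that ∑_{n≤x} f(n) = Ω(exp(d·log x / log log x)), i.e. limsup_{x→∞} |∑_{n≤x} f(n)|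 / exp(d·log x / log log x) > 0. -/
open Filter

/-- Conditions i-iii of Theorem 2 with respect to the integer `m`. -/
def SatisfiesConds (f : ℕ → ℂ) (m : ℕ) : Prop :=
  (∃ q : ℕ, q.Prime ∧ q ∣ m ∧ ∑' k : ℕ, f (q ^ k) / (q : ℂ) ^ k = 0) ∧
  (∀ p a : ℕ, p.Prime → p ^ a ∣ m → ¬ p ^ (a + 1) ∣ m →
    ∀ k : ℕ, a ≤ k → f (p ^ k) = f (p ^ a)) ∧
  (∀ p : ℕ, p.Prime → Nat.Coprime p m → ∀ k : ℕ, 1 ≤ k → f (p ^ k) = 1)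

/-- Dirichlet convolution. -/
noncomputable def dconv (f g : ℕ → ℂ) : ℕ → ℂ :=
  fun n => ∑ d ∈ n.divisors, f d * g (n / d)

noncomputable def toAF (f : ℕ → ℂ) : ArithmeticFunction ℂ :=
  ⟨fun n => if n = 0 then 0 else f n, rfl⟩

lemma toAF_apply (f : ℕ → ℂ) {n : ℕ} (hn : n ≠ 0) : toAF f n = f n := if_neg hn

lemma toAF_mult {f : ℕ → ℂ} (hf : IsMultiplicativeFn f) : (toAF f).IsMultiplicative := by
  constructor
  · rw [toAF_apply f one_ne_zero]; exact hf.1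
  · intro m n h
    rcases eq_or_ne m 0 with rfl | hm
    · rw [Nat.coprime_zero_left] at h
      subst h; simp
    rcases eq_or_ne n 0 with rfl | hn
    · rw [Nat.coprime_zero_right] at h
      subst h; simp
    rw [toAF_apply f hm, toAF_apply f hn, toAF_apply f (Nat.mul_ne_zero hm hn)]
    exact hf.2 m n h

lemma dconv_eq (f g : ℕ → ℂ) {n : ℕ} (hn : n ≠ 0) :
    dconv f g n = (toAF f * toAF g) n := by
  rw [ArithmeticFunction.mul_apply,
    Nat.sum_divisorsAntidiagonal (f := fun i j => toAF f i * toAF g j)]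
  refine Finset.sum_congr rfl fun d hd => ?_
  rw [Nat.mem_divisors] at hd
  have hd0 : d ≠ 0 := by rintro rfl; exact hn (Nat.eq_zero_of_zero_dvd hd.1)
  have h2 : n / d ≠ 0 := Nat.ne_of_gt (Nat.div_pos (Nat.le_of_dvd (Nat.pos_of_ne_zero hn) hd.1)
    (Nat.pos_of_ne_zero hd0))
  rw [toAF_apply f hd0, toAF_apply g h2]

lemma cheb (m : ℕ) (hm : 1 ≤ m) :
    4 ^ m ≤ (2 * m) ^ (Nat.primeCounting' (2 * m + 1) + 2) := by
  have h1 : 4 ^ m ≤ (2 * m + 1) * Nat.centralBinom m :=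
    Nat.four_pow_le_two_mul_add_one_mul_central_binom m
  have h2 : Nat.centralBinom m ≤ (2 * m) ^ Nat.primeCounting' (2 * m + 1) := by
    have hC : Nat.centralBinom m ≠ 0 := (Nat.centralBinom_pos m).ne'
    have hsupp : (Nat.centralBinom m).primeFactors ⊆ (2 * m + 1).primesBelow := by
      intro p hp
      rw [Nat.mem_primeFactors] at hp
      rw [Nat.mem_primesBelow]
      refine ⟨?_, hp.1⟩
      have : p ^ ((Nat.centralBinom m).factorization p) ≤ 2 * m := by
        rw [Nat.centralBinom]
        exact Nat.pow_factorization_choose_le (by omega)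
      have h1p : 1 ≤ (Nat.centralBinom m).factorization p := by
        rw [← Nat.Prime.pow_dvd_iff_le_factorization hp.1 hC, pow_one]
        exact hp.2.1
      have hple : p ≤ 2 * m := by
        calc p = p ^ 1 := (pow_one p).symm
          _ ≤ p ^ ((Nat.centralBinom m).factorization p) := Nat.pow_le_pow_right hp.1.pos h1p
          _ ≤ 2 * m := this
      omega
    calc Nat.centralBinom m = (Nat.centralBinom m).factorization.prod (· ^ ·) :=
          (Nat.factorization_prod_pow_eq_self hC).symm
      _ = ∏ p ∈ (Nat.centralBinom m).primeFactors,
            p ^ ((Nat.centralBinom m).factorization p) := by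
          rw [Finsupp.prod]; rfl
      _ ≤ ∏ _p ∈ (Nat.centralBinom m).primeFactors, 2 * m := by
          refine Finset.prod_le_prod' fun p hp => ?_
          rw [Nat.centralBinom]
          exact Nat.pow_factorization_choose_le (by omega)
      _ = (2 * m) ^ (Nat.centralBinom m).primeFactors.card := (Finset.prod_const _)
      _ ≤ (2 * m) ^ Nat.primeCounting' (2 * m + 1) := by
          rw [← Nat.primesBelow_card_eq_primeCounting']
          exact Nat.pow_le_pow_right (by omega) (Finset.card_le_card hsupp)
  calc 4 ^ m ≤ (2 * m + 1) * Nat.centralBinom m := h1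
    _ ≤ (2 * m) ^ 2 * ((2 * m) ^ Nat.primeCounting' (2 * m + 1)) := by
        apply Nat.mul_le_mul _ h2; nlinarith
    _ = (2 * m) ^ (Nat.primeCounting' (2 * m + 1) + 2) := by ring

lemma chebR (m : ℕ) (hm : 1 ≤ m) :
    (m : ℝ) * Real.log 4 ≤ (Nat.primeCounting' (2 * m + 1) + 2) * Real.log (2 * m) := by
  have h := cheb m hm
  have h4 : (4 : ℝ) ^ m ≤ ((2 * m : ℕ) : ℝ) ^ (Nat.primeCounting' (2 * m + 1) + 2) := by
    exact_mod_cast h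
  have hlog := Real.log_le_log (by positivity) h4
  rw [Real.log_pow, Real.log_pow] at hlog
  have h2m : ((2 * m : ℕ) : ℝ) = 2 * m := by push_cast; ring
  rw [h2m] at hlog
  exact_mod_cast hlog


set_option maxHeartbeats 2000000 in
theorem stmt_3 (f₁ f₂ : ℕ → ℂ) (m₁ m₂ : ℕ) (hm₁ : 1 ≤ m₁) (hm₂ : 1 ≤ m₂)
    (hmul₁ : IsMultiplicativeFn f₁) (hmul₂ : IsMultiplicativeFn f₂)
    (h₁ : SatisfiesConds f₁ m₁) (h₂ : SatisfiesConds f₂ m₂) :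
    ∃ d : ℝ, 0 < d ∧ ∃ c : ℝ, 0 < c ∧
      ∃ᶠ x : ℝ in atTop,
        c * Real.exp (d * Real.log x / Real.log (Real.log x)) ≤
          ‖∑ n ∈ Finset.Icc 1 ⌊x⌋₊, dconv f₁ f₂ n‖ := by
  have hlog2 : (0 : ℝ) < Real.log 2 := Real.log_pos one_lt_two
  have hhalf : (1:ℝ)/2 ≤ Real.log 2 := by have := Real.log_two_gt_d9; norm_num at this ⊢; linarith
  have hlog2le1 : Real.log 2 ≤ 1 := by have := Real.log_two_lt_d9; norm_num at this ⊢; linarith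
  set M := m₁ * m₂ with hMdef
  have hM0 : M ≠ 0 := Nat.mul_ne_zero (by omega) (by omega)
  set W := M.primeFactors.card with hWdef
  have hmult : (toAF f₁ * toAF f₂).IsMultiplicative :=
    (toAF_mult hmul₁).mul (toAF_mult hmul₂)
  have hprimeval : ∀ p : ℕ, p.Prime → ¬ p ∣ M → (toAF f₁ * toAF f₂) p = 2 := by
    intro p hp hpM
    have hc1 : f₁ p = 1 := by
      have := h₁.2.2 p hp
        ((Nat.Prime.coprime_iff_not_dvd hp).mpr (fun h => hpM (h.mul_right m₂))) 1 le_rfl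
      simpa using this
    have hc2 : f₂ p = 1 := by
      have := h₂.2.2 p hp
        ((Nat.Prime.coprime_iff_not_dvd hp).mpr (fun h => hpM (h.mul_left m₁))) 1 le_rfl
      simpa using this
    rw [← dconv_eq _ _ hp.pos.ne']
    unfold dconv
    rw [hp.divisors, Finset.sum_insert (by simp [hp.one_lt.ne]), Finset.sum_singleton,
      Nat.div_one, Nat.div_self hp.pos, hmul₁.1, hmul₂.1, hc1, hc2]
    ring
  refine ⟨Real.log 2 / 16, by positivity, 1/2, by norm_num, ?_⟩
  rw [Filter.frequently_atTop]
  intro X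
  set C : ℝ := max ((W : ℝ) + 11) (X + 1) with hCdef
  have hC11 : (W : ℝ) + 11 ≤ C := le_max_left _ _
  have hCX : X + 1 ≤ C := le_max_right _ _
  -- find a good m
  obtain ⟨m, hm1, h16, hsq⟩ : ∃ m : ℕ, 1 ≤ m ∧ (16:ℝ) ≤ (2*(m:ℝ)) ^ ((1:ℝ)/4) ∧
      C + (W:ℝ) + 2 ≤ Real.sqrt (2*(m:ℝ)) := by
    have hbase : Tendsto (fun m : ℕ => 2*(m:ℝ)) atTop atTop :=
      (tendsto_natCast_atTop_atTop (R := ℝ)).const_mul_atTop (by norm_num)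
    have t1 : Tendsto (fun m : ℕ => (2*(m:ℝ)) ^ ((1:ℝ)/4)) atTop atTop :=
      (tendsto_rpow_atTop (by norm_num)).comp hbase
    have t2 : Tendsto (fun m : ℕ => Real.sqrt (2*(m:ℝ))) atTop atTop := by
      simp only [Real.sqrt_eq_rpow]
      exact (tendsto_rpow_atTop (by norm_num)).comp hbase
    obtain ⟨m, h⟩ := ((eventually_ge_atTop 1).and ((t1.eventually_ge_atTop 16).and
      (t2.eventually_ge_atTop (C + W + 2)))).exists
    exact ⟨m, h.1, h.2.1, h.2.2⟩
  have hm2 : (2:ℝ) ≤ 2*(m:ℝ) := by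
    have : (1:ℝ) ≤ (m:ℝ) := by exact_mod_cast hm1
    linarith
  have hlogN_pos : 0 < Real.log (2*(m:ℝ)) :=
    Real.log_pos (by linarith)
  -- key analytic inequality for this m
  have hmBig : Real.sqrt (2*(m:ℝ)) + C ≤ (m:ℝ) * Real.log 4 / Real.log (2*(m:ℝ)) - ((W:ℝ) + 2) := by
    set t : ℝ := 2*(m:ℝ) with htdef
    have ht_pos : (0:ℝ) < t := by linarith
    have hlog4 : Real.log 4 = 2 * Real.log 2 := by
      rw [show (4:ℝ) = 2^2 by norm_num, Real.log_pow]; push_cast; ring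
    have hmt : (m:ℝ) * Real.log 4 = t * Real.log 2 := by rw [hlog4, htdef]; ring
    have hlog_le : Real.log t ≤ 4 * t ^ ((1:ℝ)/4) := by
      have := Real.log_le_rpow_div ht_pos.le (by norm_num : (0:ℝ) < 1/4)
      rw [div_div_eq_mul_div, div_eq_mul_inv] at this
      nlinarith [Real.rpow_nonneg ht_pos.le ((1:ℝ)/4)]
    have hq : t * Real.log 2 / (4 * t ^ ((1:ℝ)/4)) ≤ t * Real.log 2 / Real.log t := by
      apply div_le_div_of_nonneg_left (by positivity) hlogN_pos hlog_le
    have hsplit34 : t ^ ((3:ℝ)/4) = Real.sqrt t * t ^ ((1:ℝ)/4) := by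
      rw [Real.sqrt_eq_rpow, ← Real.rpow_add ht_pos]; norm_num
    have ht34 : t * Real.log 2 / (4 * t ^ ((1:ℝ)/4)) = (Real.log 2 / 4) * t ^ ((3:ℝ)/4) := by
      have h14 : (0:ℝ) < t ^ ((1:ℝ)/4) := Real.rpow_pos_of_pos ht_pos _
      have : t ^ ((3:ℝ)/4) * t ^ ((1:ℝ)/4) = t := by
        rw [← Real.rpow_add ht_pos]; norm_num
      field_simp
      nlinarith [this]
    have hlow : 2 * Real.sqrt t ≤ (Real.log 2 / 4) * t ^ ((3:ℝ)/4) := by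
      rw [hsplit34]
      have hs : (0:ℝ) ≤ Real.sqrt t := Real.sqrt_nonneg t
      have h2le : (2:ℝ) ≤ Real.log 2 / 4 * t ^ ((1:ℝ)/4) := by
        nlinarith [h16, hhalf, Real.rpow_nonneg ht_pos.le ((1:ℝ)/4)]
      nlinarith [mul_le_mul_of_nonneg_right h2le hs]
    have hsqt : Real.sqrt t + (C + (W:ℝ) + 2) ≤ 2 * Real.sqrt t := by linarith [hsq]
    have : Real.sqrt t + (C + (W:ℝ) + 2) ≤ t * Real.log 2 / Real.log t := by
      calc Real.sqrt t + (C + (W:ℝ) + 2) ≤ 2 * Real.sqrt t := hsqt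
        _ ≤ (Real.log 2 / 4) * t ^ ((3:ℝ)/4) := hlow
        _ = t * Real.log 2 / (4 * t ^ ((1:ℝ)/4)) := ht34.symm
        _ ≤ t * Real.log 2 / Real.log t := hq
    rw [hmt]
    linarith
  -- set up the integer n
  set N := 2 * m with hNdef
  set P := (N + 1).primesBelow.filter (fun p => ¬ p ∣ M) with hPdef
  set k := P.card with hkdef
  set n := ∏ p ∈ P, p with hndef
  have hNcast : ((N:ℕ):ℝ) = 2*(m:ℝ) := by rw [hNdef]; push_cast; ring
  have hPprime : ∀ p ∈ P, p.Prime := fun p hp =>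
    (Nat.mem_primesBelow.mp (Finset.mem_filter.mp hp).1).2
  have hPdvd : ∀ p ∈ P, ¬ p ∣ M := fun p hp => (Finset.mem_filter.mp hp).2
  have hn_pos : 0 < n := Finset.prod_pos (fun p hp => (hPprime p hp).pos)
  have hval : (toAF f₁ * toAF f₂) n = 2 ^ k := by
    rw [hndef, ArithmeticFunction.IsMultiplicative.map_prod_of_prime hmult P hPprime,
      Finset.prod_congr rfl (fun p hp => hprimeval p (hPprime p hp) (hPdvd p hp)),
      Finset.prod_const, hkdef]
  have hn_le : n ≤ 4 ^ N := by
    calc n ≤ ∏ p ∈ (N+1).primesBelow, p :=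
        Finset.prod_le_prod_of_subset_of_one_le' (Finset.filter_subset _ _)
          (fun p hp _ => (Nat.mem_primesBelow.mp hp).2.one_lt.le)
      _ = primorial N := rfl
      _ ≤ 4 ^ N := primorial_le_4_pow N
  have h2k_le : 2 ^ k ≤ n := by
    calc 2^k = ∏ _p ∈ P, 2 := by rw [Finset.prod_const, hkdef]
      _ ≤ n := Finset.prod_le_prod' (fun p hp => (hPprime p hp).two_le)
  have hk_lb : Nat.primeCounting' (N+1) ≤ k + W := by
    have hsplit := Finset.card_filter_add_card_filter_not
      (s := (N+1).primesBelow) (p := fun p => p ∣ M)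
    have hsub : ((N+1).primesBelow.filter (fun p => p ∣ M)) ⊆ M.primeFactors := by
      intro p hp
      rw [Finset.mem_filter, Nat.mem_primesBelow] at hp
      exact Nat.mem_primeFactors.mpr ⟨hp.1.2, hp.2, hM0⟩
    have h1 := Finset.card_le_card hsub
    have hPcard : (Finset.filter (fun p => ¬ p ∣ M) ((N+1).primesBelow)).card = k := by
      rw [hkdef]
    rw [← Nat.primesBelow_card_eq_primeCounting']
    omega
  -- lower bound on k
  have hk_big : Real.sqrt (2*(m:ℝ)) + C ≤ (k:ℝ) := by
    have hcheb := chebR m hm1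
    have hdiv : (m:ℝ) * Real.log 4 / Real.log (2*(m:ℝ)) ≤
        (Nat.primeCounting' (2*m + 1) : ℝ) + 2 := by
      rw [div_le_iff₀ hlogN_pos]
      exact_mod_cast hcheb
    have hkW : ((Nat.primeCounting' (2*m+1) : ℕ) : ℝ) ≤ (k:ℝ) + (W:ℝ) := by
      have := hk_lb
      rw [hNdef] at this
      exact_mod_cast this
    linarith [hmBig]
  have hCge11 : (11:ℝ) ≤ C := by
    have : (0:ℝ) ≤ (W:ℝ) := by positivity
    linarith
  have hk11 : (W:ℝ) + 11 ≤ (k:ℝ) := by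
    have := Real.sqrt_nonneg (2*(m:ℝ))
    linarith
  have hk_nat : 11 ≤ k := by
    have hkR : (11:ℝ) ≤ (k:ℝ) := by
      have := Nat.cast_nonneg (α := ℝ) W
      linarith
    exact_mod_cast hkR
  have hkm : 2*(m:ℝ) ≤ ((k:ℝ) - 1)^2 := by
    have h1 : Real.sqrt (2*(m:ℝ)) ≤ (k:ℝ) - 1 := by linarith
    have h2 : (0:ℝ) ≤ Real.sqrt (2*(m:ℝ)) := Real.sqrt_nonneg _
    calc 2*(m:ℝ) = Real.sqrt (2*(m:ℝ))^2 := (Real.sq_sqrt (by linarith)).symm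
      _ ≤ ((k:ℝ) - 1)^2 := by nlinarith
  -- sums
  set F := dconv f₁ f₂ with hFdef
  have hFn : F n = 2^k := by rw [hFdef, dconv_eq _ _ hn_pos.ne', hval]
  set S : ℕ → ℂ := fun t => ∑ j ∈ Finset.Icc 1 t, F j with hSdef
  have hsplit : S n = S (n-1) + F n := by
    have hn' : n = (n-1) + 1 := (Nat.succ_pred_eq_of_pos hn_pos).symm
    rw [hSdef]
    simp only []
    rw [hn', Finset.sum_Icc_succ_top (by omega : 1 ≤ (n-1)+1), ← hn']
  have hnormF : ‖F n‖ = 2^k := by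
    rw [hFn]
    rw [norm_pow]
    norm_num
  have hnorm : (2:ℝ)^k ≤ ‖S n‖ + ‖S (n-1)‖ := by
    calc (2:ℝ)^k = ‖F n‖ := hnormF.symm
      _ = ‖S n - S (n-1)‖ := by rw [hsplit]; congr 1; ring
      _ ≤ ‖S n‖ + ‖S (n-1)‖ := norm_sub_le _ _
  -- the key exp bound, for x in [n - 1/2, n]
  have hkey : ∀ x : ℝ, (n:ℝ) - 1/2 ≤ x → x ≤ (n:ℝ) →
      Real.exp (Real.log 2 / 16 * Real.log x / Real.log (Real.log x)) ≤ (2:ℝ)^k := by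
    intro x hx1 hx2
    have h2kn : (2:ℝ)^k ≤ (n:ℝ) := by exact_mod_cast h2k_le
    have hk13 : (13:ℝ) ≤ (k:ℝ) := by
      have : (0:ℝ) ≤ (W:ℝ) := by positivity
      have := Real.sqrt_nonneg (2*(m:ℝ))
      linarith
    have h2k_ge : (2:ℝ)^k / 2 ≤ x := by
      have h1 : (2:ℝ) ≤ (2:ℝ)^k := by
        calc (2:ℝ) = 2^1 := (pow_one 2).symm
          _ ≤ 2^k := by apply pow_le_pow_right₀ (by norm_num); omega
      linarith
    have hx_pos : (0:ℝ) < x := lt_of_lt_of_le (by positivity) h2k_ge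
    have hlx_lb : ((k:ℝ) - 1) * Real.log 2 ≤ Real.log x := by
      have : Real.log ((2:ℝ)^k / 2) ≤ Real.log x := Real.log_le_log (by positivity) h2k_ge
      rw [Real.log_div (by positivity) (by norm_num), Real.log_pow] at this
      linarith
    have hlx_pos : (0:ℝ) < Real.log x := by nlinarith
    have hlx_ub : Real.log x ≤ (N:ℝ) * Real.log 4 := by
      calc Real.log x ≤ Real.log ((4:ℝ)^N) := by
            apply Real.log_le_log hx_pos
            calc x ≤ (n:ℝ) := hx2
              _ ≤ ((4^N : ℕ):ℝ) := by exact_mod_cast hn_le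
              _ = (4:ℝ)^N := by push_cast; ring
        _ = (N:ℝ) * Real.log 4 := by rw [Real.log_pow]
    -- lower bound log log x
    have hlogk1 : (2:ℝ) ≤ Real.log ((k:ℝ) - 1) := by
      have he : Real.exp 2 ≤ (k:ℝ) - 1 := by
        have h1 := Real.exp_one_lt_d9
        have h2 : Real.exp 2 = Real.exp 1 * Real.exp 1 := by
          rw [← Real.exp_add]; norm_num
        nlinarith [Real.exp_pos 1]
      calc (2:ℝ) = Real.log (Real.exp 2) := (Real.log_exp 2).symm
        _ ≤ Real.log ((k:ℝ) - 1) := Real.log_le_log (Real.exp_pos 2) he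
    have hloglog2 : (-1:ℝ) ≤ Real.log (Real.log 2) := by
      have hexp : Real.exp (-1) ≤ Real.log 2 := by
        have h2e : (2:ℝ) ≤ Real.exp 1 := by
          have := Real.add_one_le_exp (1:ℝ); linarith
        have : Real.exp (-1) = 1 / Real.exp 1 := by
          rw [Real.exp_neg]; ring
        rw [this]
        have : (1:ℝ) / Real.exp 1 ≤ 1/2 := by
          apply div_le_div_of_nonneg_left (by norm_num) (by norm_num) h2e
        linarith
      calc (-1:ℝ) = Real.log (Real.exp (-1)) := (Real.log_exp _).symm
        _ ≤ Real.log (Real.log 2) := Real.log_le_log (Real.exp_pos _) hexp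
    have hllx_lb : (1/2 : ℝ) * Real.log ((k:ℝ)-1) ≤ Real.log (Real.log x) := by
      have h1 : Real.log (((k:ℝ)-1) * Real.log 2) ≤ Real.log (Real.log x) :=
        Real.log_le_log (by nlinarith) hlx_lb
      rw [Real.log_mul (by nlinarith) (by positivity)] at h1
      linarith
    have hllx_lb2 : (1/4 : ℝ) * Real.log (2*(m:ℝ)) ≤ Real.log (Real.log x) := by
      have h1 : Real.log (2*(m:ℝ)) ≤ 2 * Real.log ((k:ℝ)-1) := by
        have := Real.log_le_log (by linarith) hkm
        rw [Real.log_pow] at this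
        push_cast at this
        linarith
      linarith
    have hllx_pos : (0:ℝ) < Real.log (Real.log x) := by
      have := hlogN_pos; linarith
    -- ratio bound
    have hratio : Real.log x / Real.log (Real.log x) ≤ 16 * (k:ℝ) := by
      have hd_pos : (0:ℝ) < (1/4 : ℝ) * Real.log (2*(m:ℝ)) := by positivity
      have h1 : Real.log x / Real.log (Real.log x) ≤
          ((N:ℝ) * Real.log 4) / ((1/4 : ℝ) * Real.log (2*(m:ℝ))) := by
        apply div_le_div₀ (by positivity) hlx_ub hd_pos hllx_lb2
      have h2 : ((N:ℝ) * Real.log 4) / ((1/4 : ℝ) * Real.log (2*(m:ℝ))) =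
          8 * ((m:ℝ) * Real.log 4 / Real.log (2*(m:ℝ))) := by
        rw [hNcast]; field_simp; ring
      have hdiv : (m:ℝ) * Real.log 4 / Real.log (2*(m:ℝ)) ≤
          (Nat.primeCounting' (2*m + 1) : ℝ) + 2 := by
        rw [div_le_iff₀ hlogN_pos]
        exact_mod_cast chebR m hm1
      have hkW : ((Nat.primeCounting' (2*m+1) : ℕ) : ℝ) ≤ (k:ℝ) + (W:ℝ) := by
        have := hk_lb; rw [hNdef] at this; exact_mod_cast this
      calc Real.log x / Real.log (Real.log x)
          ≤ 8 * ((m:ℝ) * Real.log 4 / Real.log (2*(m:ℝ))) := by rw [← h2]; exact h1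
        _ ≤ 8 * (((Nat.primeCounting' (2*m+1)) : ℝ) + 2) := by linarith
        _ ≤ 8 * ((k:ℝ) + (W:ℝ) + 2) := by linarith
        _ ≤ 16 * (k:ℝ) := by linarith [hk11]
    have hfinal : Real.log 2 / 16 * Real.log x / Real.log (Real.log x) ≤ (k:ℝ) * Real.log 2 := by
      rw [mul_div_assoc]
      calc Real.log 2 / 16 * (Real.log x / Real.log (Real.log x))
          ≤ Real.log 2 / 16 * (16 * (k:ℝ)) := by
            apply mul_le_mul_of_nonneg_left hratio (by positivity)
        _ = (k:ℝ) * Real.log 2 := by ring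
    calc Real.exp (Real.log 2 / 16 * Real.log x / Real.log (Real.log x))
        ≤ Real.exp ((k:ℝ) * Real.log 2) := Real.exp_le_exp.mpr hfinal
      _ = (2:ℝ)^k := by rw [Real.exp_nat_mul, Real.exp_log (by norm_num)]
  -- now pick x
  have hXn : X ≤ (n:ℝ) - 1/2 := by
    have h1 : (k:ℝ) + 1 ≤ (2:ℝ)^k := by
      have := Nat.lt_two_pow_self (n := k)
      exact_mod_cast this
    have h2 : (2:ℝ)^k ≤ (n:ℝ) := by exact_mod_cast h2k_le
    have h3 : X + 1 ≤ (k:ℝ) := by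
      have := Real.sqrt_nonneg (2*(m:ℝ))
      linarith [hk_big, hCX]
    linarith
  by_cases hcase : (2:ℝ)^k / 2 ≤ ‖S n‖
  · refine ⟨(n:ℝ), by linarith, ?_⟩
    rw [Nat.floor_natCast]
    have := hkey (n:ℝ) (by linarith) le_rfl
    calc 1/2 * Real.exp (Real.log 2 / 16 * Real.log (n:ℝ) / Real.log (Real.log (n:ℝ)))
        ≤ 1/2 * (2:ℝ)^k := by linarith
      _ ≤ ‖S n‖ := by linarith
  · refine ⟨(n:ℝ) - 1/2, by linarith, ?_⟩
    have hfloor : ⌊(n:ℝ) - 1/2⌋₊ = n - 1 := by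
      rw [Nat.floor_eq_iff (by
        have h1 : (1:ℝ) ≤ (n:ℝ) := by exact_mod_cast hn_pos
        linarith)]
      have h1 : (1:ℝ) ≤ (n:ℝ) := by exact_mod_cast hn_pos
      rw [Nat.cast_sub hn_pos]
      push_cast
      constructor <;> linarith
    rw [hfloor]
    have hS1 : (2:ℝ)^k / 2 ≤ ‖S (n-1)‖ := by
      push_neg at hcase
      linarith
    have := hkey ((n:ℝ) - 1/2) le_rfl (by linarith)
    calc 1/2 * Real.exp (Real.log 2 / 16 * Real.log ((n:ℝ) - 1/2) / Real.log (Real.log ((n:ℝ) - 1/2)))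
        ≤ 1/2 * (2:ℝ)^k := by linarith
      _ ≤ ‖S (n-1)‖ := by linarith
end

section
/- Let f₁ and f₂ be multiplicative functions ℕ → ℂ such that, for j = 1,2, f_j satisfies with respect to an integer m_j ≥ 1 the conditions: (i) for some prime q dividing m_j, ∑_{k=0}^∞ f_j(q^k)/q^k = 0; (ii) for each prime power p^a exactly dividing m_j, f_j(p^k) = f_j(p^a) for all k ≥ a; (iii) for each prime p with gcd(p,m_j) = 1, f_j(p^k) = 1 for all k ≥ 1. Let f = f₁ ∗ f₂. Then for any a > 0 such that Δ(x) = O(x^a) as x → ∞, we also have ∑_{n≤x} f(n) = O(x^a) as x → ∞. -/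
open Filter Asymptotics

/-- The error term in the Dirichlet divisor problem. -/
noncomputable def Δ (x : ℝ) : ℝ :=
  (∑ n ∈ Finset.Icc 1 ⌊x⌋₊, (n.divisors.card : ℝ)) - x * Real.log x -
    (2 * Real.eulerMascheroniConstant - 1) * x

namespace Stmt5Aux

open ArithmeticFunction Finset
open scoped ArithmeticFunction.zeta

noncomputable def toAF (f : ℕ → ℂ) : ArithmeticFunction ℂ :=
  ⟨fun n => if n = 0 then 0 else f n, rfl⟩

lemma toAF_apply (f : ℕ → ℂ) {n : ℕ} (hn : n ≠ 0) : toAF f n = f n := if_neg hn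

noncomputable def muC : ArithmeticFunction ℂ :=
  ((ArithmeticFunction.moebius : ArithmeticFunction ℤ) : ArithmeticFunction ℂ)

lemma toAF_mult {f : ℕ → ℂ} (hf : IsMultiplicativeFn f) : (toAF f).IsMultiplicative := by
  constructor
  · simpa [toAF_apply] using hf.1
  · intro m n h
    rcases eq_or_ne m 0 with rfl | hm
    · obtain rfl : n = 1 := Nat.coprime_zero_left n |>.mp h
      simp [toAF]
    rcases eq_or_ne n 0 with rfl | hn
    · obtain rfl : m = 1 := Nat.coprime_zero_right m |>.mp h
      simp [toAF]
    rw [toAF_apply _ (Nat.mul_ne_zero hm hn), toAF_apply _ hm, toAF_apply _ hn]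
    exact hf.2 m n h

lemma G_mult {f : ℕ → ℂ} (hf : IsMultiplicativeFn f) :
    (toAF f * muC).IsMultiplicative :=
  (toAF_mult hf).mul (isMultiplicative_moebius.intCast)

lemma G_apply_prime_pow (f : ℕ → ℂ) {p : ℕ} (hp : p.Prime)
    {k : ℕ} (hk : 1 ≤ k) :
    (toAF f * muC) (p ^ k) = f (p ^ k) - f (p ^ (k - 1)) := by
  obtain ⟨j, rfl⟩ : ∃ j, k = j + 1 := ⟨k - 1, (Nat.succ_pred_eq_of_pos hk).symm⟩
  rw [mul_apply, Nat.sum_divisorsAntidiagonal (f := fun a b => toAF f a * muC b),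
    Nat.sum_divisors_prime_pow hp]
  have hppos : 0 < p := hp.pos
  have hmu : ∀ i : ℕ, i ≤ j + 1 → muC (p ^ (j + 1) / p ^ i)
      = (((ArithmeticFunction.moebius (p ^ (j + 1 - i)) : ℤ)) : ℂ) := by
    intro i hi
    rw [Nat.pow_div hi hppos]; rfl
  rw [Finset.sum_range_succ, Finset.sum_range_succ]
  have h1 : ∀ i ∈ Finset.range j, toAF f (p ^ i) * muC (p ^ (j + 1) / p ^ i) = 0 := by
    intro i hi
    rw [Finset.mem_range] at hi
    rw [hmu i (by omega)]
    rw [ArithmeticFunction.moebius_apply_prime_pow hp (by omega)]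
    rw [if_neg (by omega)]
    simp
  rw [Finset.sum_congr rfl h1, Finset.sum_const_zero, zero_add]
  rw [hmu j (by omega), hmu (j + 1) le_rfl]
  have e1 : j + 1 - j = 1 := by omega
  have e2 : j + 1 - (j + 1) = 0 := by omega
  rw [e1, e2, ArithmeticFunction.moebius_apply_prime_pow hp one_ne_zero, if_pos rfl,
    pow_zero, ArithmeticFunction.moebius_apply_one]
  rw [toAF_apply _ (pow_ne_zero _ hp.ne_zero), toAF_apply _ (pow_ne_zero _ hp.ne_zero)]
  push_cast
  ring_nf


lemma G_support {f : ℕ → ℂ} {m : ℕ} (hm : m ≠ 0) (hf : IsMultiplicativeFn f)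
    (hii : ∀ p a : ℕ, p.Prime → p ^ a ∣ m → ¬ p ^ (a + 1) ∣ m →
      ∀ k : ℕ, a ≤ k → f (p ^ k) = f (p ^ a)) :
    ∀ n : ℕ, ¬ n ∣ m → (toAF f * muC) n = 0 := by
  intro n hn
  rcases eq_or_ne n 0 with rfl | hn0
  · simp
  have hnotle : ¬ n.factorization ≤ m.factorization := by
    intro h
    exact hn ((Nat.factorization_le_iff_dvd hn0 hm).mp h)
  rw [Finsupp.le_def] at hnotle
  push_neg at hnotle
  obtain ⟨p, hplt⟩ := hnotle
  have hkpos : 0 < n.factorization p := lt_of_le_of_lt (Nat.zero_le _) hplt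
  have hp : p.Prime := by
    have : p ∈ n.factorization.support := by
      rw [Finsupp.mem_support_iff]; omega
    exact Nat.prime_of_mem_primeFactors (by rwa [Nat.support_factorization] at this)
  set k := n.factorization p with hk
  set a := m.factorization p with hadef
  have hdecomp : p ^ k * (n / p ^ k) = n := Nat.ordProj_mul_ordCompl_eq_self n p
  have hcop : Nat.Coprime (p ^ k) (n / p ^ k) :=
    Nat.Coprime.pow_left _ (Nat.coprime_ordCompl hp hn0)
  have hGpk : (toAF f * muC) (p ^ k) = 0 := by
    rw [G_apply_prime_pow f hp hkpos]
    have hconst := hii p a hp (Nat.ordProj_dvd m p) (Nat.pow_succ_factorization_not_dvd hm hp)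
    rw [hconst k (by omega), hconst (k - 1) (by omega), sub_self]
  calc (toAF f * muC) n = (toAF f * muC) (p ^ k * (n / p ^ k)) := by rw [hdecomp]
    _ = (toAF f * muC) (p ^ k) * (toAF f * muC) (n / p ^ k) :=
        (G_mult hf).map_mul_of_coprime hcop
    _ = 0 := by rw [hGpk, zero_mul]

lemma local_sum_eq_zero {f : ℕ → ℂ} {q c : ℕ} (hq : q.Prime) (hc : 1 ≤ c)
    (hconst : ∀ k, c ≤ k → f (q ^ k) = f (q ^ c))
    (htsum : ∑' k : ℕ, f (q ^ k) / (q : ℂ) ^ k = 0) (hf1 : f 1 = 1) :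
    ∑ k ∈ Finset.range (c + 1), (toAF f * muC) (q ^ k) * ((q : ℂ) ^ k)⁻¹ = 0 := by
  have hq2 : 2 ≤ q := hq.two_le
  have hqC : (q : ℂ) ≠ 0 := by
    simpa using fun h => absurd h (by omega : q ≠ 0)
  have hnorm : ‖(q : ℂ)⁻¹‖ < 1 := by
    rw [norm_inv, Complex.norm_natCast]
    rw [inv_lt_one_iff₀]
    right; exact_mod_cast by omega
  have hone : (1 : ℂ) - (q : ℂ)⁻¹ ≠ 0 := by
    intro h
    have : (q : ℂ)⁻¹ = 1 := by linear_combination -h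
    have := congrArg norm this
    rw [norm_inv, Complex.norm_natCast, norm_one] at this
    have : (q : ℝ) = 1 := by
      field_simp at this
      linarith [this]
    exact_mod_cast absurd this (by exact_mod_cast (by omega : (q:ℕ) ≠ 1))
  -- summability
  have htail : ∀ k : ℕ, f (q ^ (k + c)) / (q : ℂ) ^ (k + c)
      = (f (q ^ c) / (q : ℂ) ^ c) * ((q : ℂ)⁻¹) ^ k := by
    intro k
    rw [hconst _ (by omega), pow_add, inv_pow, div_mul_eq_div_div_swap, div_eq_mul_inv]
  have hsumtail : Summable (fun k : ℕ => f (q ^ (k + c)) / (q : ℂ) ^ (k + c)) := by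
    simp only [htail]
    exact (summable_geometric_of_norm_lt_one hnorm).mul_left _
  have hsum : Summable (fun k : ℕ => f (q ^ k) / (q : ℂ) ^ k) :=
    (summable_nat_add_iff c).mp hsumtail
  have hsplit := Summable.sum_add_tsum_nat_add (f := fun k : ℕ => f (q ^ k) / (q : ℂ) ^ k) c hsum
  have htailval : (∑' k : ℕ, f (q ^ (k + c)) / (q : ℂ) ^ (k + c))
      = (f (q ^ c) / (q : ℂ) ^ c) * (1 - (q : ℂ)⁻¹)⁻¹ := by
    simp only [htail]
    rw [tsum_mul_left, tsum_geometric_of_norm_lt_one hnorm]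
  set S := ∑ k ∈ Finset.range c, f (q ^ k) / (q : ℂ) ^ k with hS
  have hmain : S + (f (q ^ c) / (q : ℂ) ^ c) * (1 - (q : ℂ)⁻¹)⁻¹ = 0 := by
    rw [← htailval, hsplit, htsum]
  -- now compute the target
  have hGval : ∀ k ∈ Finset.range c,
      (toAF f * muC) (q ^ (k + 1)) * ((q : ℂ) ^ (k + 1))⁻¹
        = (f (q ^ (k + 1)) - f (q ^ k)) * ((q : ℂ) ^ (k + 1))⁻¹ := by
    intro k _
    rw [G_apply_prime_pow f hq (by omega)]
    norm_num
  rw [Finset.sum_range_succ']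
  rw [Finset.sum_congr rfl hGval]
  have hG1 : (toAF f * muC) (q ^ 0) * ((q : ℂ) ^ 0)⁻¹ = 1 := by
    simp [ArithmeticFunction.mul_apply_one, toAF_apply f one_ne_zero, hf1, muC]
  rw [hG1]
  have hsplit2 : ∀ k : ℕ, (f (q ^ (k + 1)) - f (q ^ k)) * ((q : ℂ) ^ (k + 1))⁻¹
      = f (q ^ (k + 1)) / (q : ℂ) ^ (k + 1) - (q : ℂ)⁻¹ * (f (q ^ k) / (q : ℂ) ^ k) := by
    intro k
    rw [pow_succ]
    field_simp
    ring
  simp only [hsplit2]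
  rw [Finset.sum_sub_distrib, ← Finset.mul_sum]
  have hshift : ∑ k ∈ Finset.range c, f (q ^ (k + 1)) / (q : ℂ) ^ (k + 1)
      = S + f (q ^ c) / (q : ℂ) ^ c - 1 := by
    have h1 : ∑ k ∈ Finset.range (c + 1), f (q ^ k) / (q : ℂ) ^ k
        = S + f (q ^ c) / (q : ℂ) ^ c := Finset.sum_range_succ _ c
    have h2 : ∑ k ∈ Finset.range (c + 1), f (q ^ k) / (q : ℂ) ^ k
        = (∑ k ∈ Finset.range c, f (q ^ (k + 1)) / (q : ℂ) ^ (k + 1)) + f (q ^ 0) / (q : ℂ) ^ 0 :=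
      Finset.sum_range_succ' _ c
    rw [h1] at h2
    rw [pow_zero, pow_zero, hf1] at h2
    norm_num at h2 ⊢
    linear_combination -h2
  rw [hshift, ← hS]
  have hSval : S = -((f (q ^ c) / (q : ℂ) ^ c) * (1 - (q : ℂ)⁻¹)⁻¹) := by
    linear_combination hmain
  rw [hSval]
  linear_combination (-(f (q ^ c) / (q : ℂ) ^ c)) * mul_inv_cancel₀ hone


noncomputable def winv : ArithmeticFunction ℂ := ⟨fun n => (n : ℂ)⁻¹, by simp⟩

lemma winv_apply (n : ℕ) : winv n = (n : ℂ)⁻¹ := rfl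

lemma winv_mult : winv.IsMultiplicative := by
  constructor
  · simp [winv_apply]
  · intro m n _
    simp only [winv_apply]
    push_cast
    rw [mul_inv]

lemma A_eq_zero {f : ℕ → ℂ} {m : ℕ} (hm : m ≠ 0) (hf : IsMultiplicativeFn f)
    (hcond : SatisfiesConds f m) :
    ∑ d ∈ m.divisors, (toAF f * muC) d * (d : ℂ)⁻¹ = 0 := by
  obtain ⟨⟨q, hq, hqm, htsum⟩, hii, -⟩ := hcond
  set H : ArithmeticFunction ℂ := ((toAF f * muC).pmul winv) with hH
  have hHmult : H.IsMultiplicative := (G_mult hf).pmul winv_mult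
  have hHz : (H * (ζ : ArithmeticFunction ℂ)).IsMultiplicative :=
    hHmult.mul (isMultiplicative_zeta.natCast)
  have hsum_eq : ∑ d ∈ m.divisors, (toAF f * muC) d * (d : ℂ)⁻¹
      = (H * (ζ : ArithmeticFunction ℂ)) m := by
    rw [ArithmeticFunction.coe_mul_zeta_apply]
    exact Finset.sum_congr rfl fun d _ => by rw [hH, ArithmeticFunction.pmul_apply, winv_apply]
  rw [hsum_eq]
  set c := m.factorization q with hcdef
  have hc : 1 ≤ c := (Nat.Prime.factorization_pos_of_dvd hq hm hqm)
  have hdecomp : q ^ c * (m / q ^ c) = m := Nat.ordProj_mul_ordCompl_eq_self m q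
  have hcop : Nat.Coprime (q ^ c) (m / q ^ c) :=
    Nat.Coprime.pow_left _ (Nat.coprime_ordCompl hq hm)
  have hqc : (H * (ζ : ArithmeticFunction ℂ)) (q ^ c) = 0 := by
    rw [ArithmeticFunction.coe_mul_zeta_apply, Nat.sum_divisors_prime_pow hq]
    have : ∀ k ∈ Finset.range (c + 1), H (q ^ k)
        = (toAF f * muC) (q ^ k) * ((q : ℂ) ^ k)⁻¹ := by
      intro k _
      rw [hH, ArithmeticFunction.pmul_apply, winv_apply]
      push_cast
      rfl
    rw [Finset.sum_congr rfl this]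
    have hconst : ∀ k, c ≤ k → f (q ^ k) = f (q ^ c) :=
      hii q c hq (Nat.ordProj_dvd m q) (Nat.pow_succ_factorization_not_dvd hm hq)
    exact local_sum_eq_zero hq hc hconst htsum hf.1
  calc (H * (ζ : ArithmeticFunction ℂ)) m
      = (H * (ζ : ArithmeticFunction ℂ)) (q ^ c * (m / q ^ c)) := by rw [hdecomp]
    _ = (H * (ζ : ArithmeticFunction ℂ)) (q ^ c)
        * (H * (ζ : ArithmeticFunction ℂ)) (m / q ^ c) := hHz.map_mul_of_coprime hcop
    _ = 0 := by rw [hqc, zero_mul]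

lemma swap_sum (U V : ArithmeticFunction ℂ) (N : ℕ) :
    ∑ n ∈ Finset.Icc 1 N, (U * V) n
      = ∑ d ∈ Finset.Icc 1 N, U d * ∑ e ∈ Finset.Icc 1 (N / d), V e := by
  simp only [ArithmeticFunction.mul_apply, Finset.mul_sum]
  rw [Finset.sum_sigma', Finset.sum_sigma']
  refine Finset.sum_nbij' (fun x => ⟨x.2.1, x.2.2⟩) (fun y => ⟨y.1 * y.2, (y.1, y.2)⟩)
    ?_ ?_ ?_ ?_ ?_
  · rintro ⟨n, d, e⟩ hx
    simp only [Finset.mem_sigma, Finset.mem_Icc, Nat.mem_divisorsAntidiagonal] at hx ⊢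
    obtain ⟨⟨hn1, hnN⟩, hde, hn0⟩ := hx
    have hd0 : 0 < d := by
      rcases Nat.eq_zero_or_pos d with rfl | h
      · omega
      · exact h
    have he0 : 0 < e := by
      rcases Nat.eq_zero_or_pos e with rfl | h
      · omega
      · exact h
    refine ⟨⟨hd0, ?_⟩, he0, ?_⟩
    · calc d ≤ d * e := Nat.le_mul_of_pos_right d he0
        _ = n := hde
        _ ≤ N := hnN
    · rw [Nat.le_div_iff_mul_le hd0]
      calc e * d = d * e := Nat.mul_comm e d
        _ = n := hde
        _ ≤ N := hnN
  · rintro ⟨d, e⟩ hy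
    simp only [Finset.mem_sigma, Finset.mem_Icc, Nat.mem_divisorsAntidiagonal] at hy ⊢
    obtain ⟨⟨hd1, hdN⟩, he1, heN⟩ := hy
    have hdeN : d * e ≤ N := by
      rw [Nat.le_div_iff_mul_le (by omega : 0 < d)] at heN
      calc d * e = e * d := Nat.mul_comm d e
        _ ≤ N := heN
    refine ⟨⟨Nat.one_le_iff_ne_zero.mpr (Nat.mul_ne_zero (by omega) (by omega)), hdeN⟩, ?_,
      Nat.mul_ne_zero (by omega) (by omega)⟩
    trivial
  · rintro ⟨n, d, e⟩ hx
    simp only [Finset.mem_sigma, Nat.mem_divisorsAntidiagonal] at hx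
    obtain ⟨-, hde, -⟩ := hx
    subst hde
    rfl
  · rintro ⟨d, e⟩ _
    rfl
  · rintro ⟨n, d, e⟩ _
    rfl


end Stmt5Aux

namespace Stmt5Aux

open ArithmeticFunction Finset
open scoped ArithmeticFunction.zeta

lemma dconv_eq (f g : ℕ → ℂ) (n : ℕ) : dconv f g n = (toAF f * toAF g) n := by
  rw [ArithmeticFunction.mul_apply,
    Nat.sum_divisorsAntidiagonal (f := fun a b => toAF f a * toAF g b)]
  unfold dconv
  refine Finset.sum_congr rfl fun d hd => ?_
  rw [Nat.mem_divisors] at hd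
  have hn0 : n ≠ 0 := hd.2
  have hd0 : d ≠ 0 := by rintro rfl; exact hn0 (Nat.eq_zero_of_zero_dvd hd.1)
  have hnd0 : n / d ≠ 0 := by
    have := Nat.div_pos (Nat.le_of_dvd (Nat.pos_of_ne_zero hn0) hd.1) (Nat.pos_of_ne_zero hd0)
    omega
  rw [toAF_apply _ hd0, toAF_apply _ hnd0]

lemma ZZ_apply (n : ℕ) :
    ((ζ : ArithmeticFunction ℂ) * (ζ : ArithmeticFunction ℂ)) n = (n.divisors.card : ℂ) := by
  rw [ArithmeticFunction.coe_mul_zeta_apply]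
  rcases eq_or_ne n 0 with rfl | hn
  · simp
  · rw [Finset.card_eq_sum_ones]
    push_cast
    refine Finset.sum_congr rfl fun d hd => ?_
    have hd0 : d ≠ 0 := (Nat.pos_of_mem_divisors hd).ne'
    simp [hd0]

end Stmt5Aux

theorem stmt_5 (f₁ f₂ : ℕ → ℂ) (m₁ m₂ : ℕ) (hm₁ : 1 ≤ m₁) (hm₂ : 1 ≤ m₂)
    (hmul₁ : IsMultiplicativeFn f₁) (hmul₂ : IsMultiplicativeFn f₂)
    (h₁ : SatisfiesConds f₁ m₁) (h₂ : SatisfiesConds f₂ m₂)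
    (a : ℝ) (ha : 0 < a) (hΔ : Δ =O[atTop] fun x : ℝ => x ^ a) :
    (fun x : ℝ => ∑ n ∈ Finset.Icc 1 ⌊x⌋₊, dconv f₁ f₂ n) =O[atTop]
      fun x : ℝ => x ^ a := by
  classical
  have hm₁0 : m₁ ≠ 0 := by omega
  have hm₂0 : m₂ ≠ 0 := by omega
  set G₁ := Stmt5Aux.toAF f₁ * Stmt5Aux.muC with hG₁
  set G₂ := Stmt5Aux.toAF f₂ * Stmt5Aux.muC with hG₂
  have hA₁ : ∑ d ∈ m₁.divisors, G₁ d * (d : ℂ)⁻¹ = 0 := Stmt5Aux.A_eq_zero hm₁0 hmul₁ h₁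
  have hA₂ : ∑ d ∈ m₂.divisors, G₂ d * (d : ℂ)⁻¹ = 0 := Stmt5Aux.A_eq_zero hm₂0 hmul₂ h₂
  have hsupp₁ : ∀ n, ¬ n ∣ m₁ → G₁ n = 0 := Stmt5Aux.G_support hm₁0 hmul₁ h₁.2.1
  have hsupp₂ : ∀ n, ¬ n ∣ m₂ → G₂ n = 0 := Stmt5Aux.G_support hm₂0 hmul₂ h₂.2.1
  set γc : ℝ := 2 * Real.eulerMascheroniConstant - 1 with hγ
  have hEq : (fun x : ℝ => ∑ n ∈ Finset.Icc 1 ⌊x⌋₊, dconv f₁ f₂ n) =ᶠ[atTop]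
      (fun x : ℝ => ∑ d ∈ m₁.divisors, ∑ e ∈ m₂.divisors,
        G₁ d * G₂ e * ((Δ (x / ((d * e : ℕ) : ℝ)) : ℝ) : ℂ)) := by
    have hmuZ : Stmt5Aux.muC * ((ArithmeticFunction.zeta : ArithmeticFunction ℕ) :
        ArithmeticFunction ℂ) = 1 := ArithmeticFunction.coe_moebius_mul_coe_zeta
    filter_upwards [eventually_ge_atTop (1 : ℝ),
      eventually_ge_atTop ((m₁ * m₂ : ℕ) : ℝ)] with x hx1 hx2
    set Z : ArithmeticFunction ℂ :=
      ((ArithmeticFunction.zeta : ArithmeticFunction ℕ) : ArithmeticFunction ℂ) with hZ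
    set N := ⌊x⌋₊ with hN
    have hNge : m₁ * m₂ ≤ N := Nat.le_floor hx2
    have hx0 : (0 : ℝ) < x := by linarith
    set D : ℕ → ℂ := fun K => ∑ t ∈ Finset.Icc 1 K, ((t.divisors.card : ℂ)) with hD
    have hfact : Stmt5Aux.toAF f₁ * Stmt5Aux.toAF f₂ = G₁ * (G₂ * (Z * Z)) := by
      have e₁ : G₁ * Z = Stmt5Aux.toAF f₁ := by
        rw [hG₁, mul_assoc, hmuZ, mul_one]
      have e₂ : G₂ * Z = Stmt5Aux.toAF f₂ := by
        rw [hG₂, mul_assoc, hmuZ, mul_one]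
      calc Stmt5Aux.toAF f₁ * Stmt5Aux.toAF f₂ = (G₁ * Z) * (G₂ * Z) := by rw [e₁, e₂]
        _ = G₁ * (G₂ * (Z * Z)) := by ring
    have expand : ∀ d ∈ m₁.divisors, ∀ e ∈ m₂.divisors,
        G₁ d * G₂ e * (((x / ((d * e : ℕ) : ℝ)) * Real.log (x / ((d * e : ℕ) : ℝ))
            + γc * (x / ((d * e : ℕ) : ℝ)) : ℝ) : ℂ)
          = ((x * Real.log x + γc * x : ℝ) : ℂ) * ((G₁ d * (d : ℂ)⁻¹) * (G₂ e * (e : ℂ)⁻¹))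
            - ((x : ℝ) : ℂ) * ((G₁ d * (d : ℂ)⁻¹ * ((Real.log d : ℝ) : ℂ)) * (G₂ e * (e : ℂ)⁻¹))
            - ((x : ℝ) : ℂ) * ((G₁ d * (d : ℂ)⁻¹) * (G₂ e * (e : ℂ)⁻¹ * ((Real.log e : ℝ) : ℂ))) := by
      intro d hd e he
      have hd1 : 1 ≤ d := Nat.pos_of_mem_divisors hd
      have he1 : 1 ≤ e := Nat.pos_of_mem_divisors he
      have hdR : (0 : ℝ) < (d : ℝ) := by exact_mod_cast hd1
      have heR : (0 : ℝ) < (e : ℝ) := by exact_mod_cast he1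
      have hlog : Real.log (x / ((d * e : ℕ) : ℝ))
          = Real.log x - Real.log d - Real.log e := by
        push_cast
        rw [Real.log_div (ne_of_gt hx0) (by positivity),
          Real.log_mul (by positivity) (by positivity)]
        ring
      rw [hlog]
      have hdC : ((d : ℕ) : ℂ) ≠ 0 := Nat.cast_ne_zero.mpr (by omega)
      have heC : ((e : ℕ) : ℂ) ≠ 0 := Nat.cast_ne_zero.mpr (by omega)
      push_cast
      field_simp
      ring
    have Tzero : ∑ d ∈ m₁.divisors, ∑ e ∈ m₂.divisors,
        G₁ d * G₂ e * (((x / ((d * e : ℕ) : ℝ)) * Real.log (x / ((d * e : ℕ) : ℝ))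
          + γc * (x / ((d * e : ℕ) : ℝ)) : ℝ) : ℂ) = 0 := by
      calc ∑ d ∈ m₁.divisors, ∑ e ∈ m₂.divisors,
          G₁ d * G₂ e * (((x / ((d * e : ℕ) : ℝ)) * Real.log (x / ((d * e : ℕ) : ℝ))
            + γc * (x / ((d * e : ℕ) : ℝ)) : ℝ) : ℂ)
          = ∑ d ∈ m₁.divisors, ∑ e ∈ m₂.divisors,
            (((x * Real.log x + γc * x : ℝ) : ℂ) * ((G₁ d * (d : ℂ)⁻¹) * (G₂ e * (e : ℂ)⁻¹))
            - ((x : ℝ) : ℂ) * ((G₁ d * (d : ℂ)⁻¹ * ((Real.log d : ℝ) : ℂ)) * (G₂ e * (e : ℂ)⁻¹))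
            - ((x : ℝ) : ℂ) * ((G₁ d * (d : ℂ)⁻¹) * (G₂ e * (e : ℂ)⁻¹ * ((Real.log e : ℝ) : ℂ)))) :=
          Finset.sum_congr rfl fun d hd => Finset.sum_congr rfl fun e he => expand d hd e he
        _ = ((x * Real.log x + γc * x : ℝ) : ℂ)
              * ((∑ d ∈ m₁.divisors, G₁ d * (d : ℂ)⁻¹) * (∑ e ∈ m₂.divisors, G₂ e * (e : ℂ)⁻¹))
            - ((x : ℝ) : ℂ) * ((∑ d ∈ m₁.divisors, G₁ d * (d : ℂ)⁻¹ * ((Real.log d : ℝ) : ℂ))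
              * (∑ e ∈ m₂.divisors, G₂ e * (e : ℂ)⁻¹))
            - ((x : ℝ) : ℂ) * ((∑ d ∈ m₁.divisors, G₁ d * (d : ℂ)⁻¹)
              * (∑ e ∈ m₂.divisors, G₂ e * (e : ℂ)⁻¹ * ((Real.log e : ℝ) : ℂ))) := by
          rw [Finset.sum_mul_sum, Finset.sum_mul_sum, Finset.sum_mul_sum]
          simp only [Finset.mul_sum, ← Finset.sum_sub_distrib]
        _ = 0 := by rw [hA₁, hA₂]; ring
    calc ∑ n ∈ Finset.Icc 1 N, dconv f₁ f₂ n
        = ∑ n ∈ Finset.Icc 1 N, (G₁ * (G₂ * (Z * Z))) n := by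
          refine Finset.sum_congr rfl fun n _ => ?_
          rw [Stmt5Aux.dconv_eq, hfact]
      _ = ∑ d ∈ Finset.Icc 1 N, G₁ d * ∑ e ∈ Finset.Icc 1 (N / d), (G₂ * (Z * Z)) e :=
          Stmt5Aux.swap_sum _ _ N
      _ = ∑ d ∈ Finset.Icc 1 N, G₁ d * ∑ e ∈ Finset.Icc 1 (N / d), G₂ e * D (N / d / e) := by
          refine Finset.sum_congr rfl fun d _ => ?_
          rw [Stmt5Aux.swap_sum]
          congr 1
          refine Finset.sum_congr rfl fun e _ => ?_
          congr 1
          exact Finset.sum_congr rfl fun t _ => Stmt5Aux.ZZ_apply t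
      _ = ∑ d ∈ m₁.divisors, G₁ d * ∑ e ∈ Finset.Icc 1 (N / d), G₂ e * D (N / d / e) := by
          refine (Finset.sum_subset ?_ ?_).symm
          · intro d hd
            have h1 : 1 ≤ d := Nat.pos_of_mem_divisors hd
            have h2 : d ≤ m₁ := Nat.le_of_dvd (by omega) (Nat.mem_divisors.mp hd).1
            have h3 : m₁ ≤ N := le_trans (Nat.le_mul_of_pos_right m₁ (by omega)) hNge
            exact Finset.mem_Icc.mpr ⟨h1, by omega⟩
          · intro d _ hd
            have hnd : ¬ d ∣ m₁ := fun h => hd (Nat.mem_divisors.mpr ⟨h, hm₁0⟩)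
            rw [hsupp₁ d hnd, zero_mul]
      _ = ∑ d ∈ m₁.divisors, G₁ d * ∑ e ∈ m₂.divisors, G₂ e * D (N / d / e) := by
          refine Finset.sum_congr rfl fun d hd => ?_
          congr 1
          refine (Finset.sum_subset ?_ ?_).symm
          · intro e he
            have he1 : 1 ≤ e := Nat.pos_of_mem_divisors he
            have he2 : e ≤ m₂ := Nat.le_of_dvd (by omega) (Nat.mem_divisors.mp he).1
            have hd1 : 1 ≤ d := Nat.pos_of_mem_divisors hd
            have hd2 : d ≤ m₁ := Nat.le_of_dvd (by omega) (Nat.mem_divisors.mp hd).1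
            have hm2 : m₂ ≤ N / d := by
              rw [Nat.le_div_iff_mul_le (by omega : 0 < d)]
              calc m₂ * d ≤ m₂ * m₁ := Nat.mul_le_mul_left m₂ hd2
                _ = m₁ * m₂ := Nat.mul_comm _ _
                _ ≤ N := hNge
            exact Finset.mem_Icc.mpr ⟨he1, le_trans he2 hm2⟩
          · intro e _ he
            have hne : ¬ e ∣ m₂ := fun h => he (Nat.mem_divisors.mpr ⟨h, hm₂0⟩)
            rw [hsupp₂ e hne, zero_mul]
      _ = ∑ d ∈ m₁.divisors, ∑ e ∈ m₂.divisors,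
            (G₁ d * G₂ e * ((Δ (x / ((d * e : ℕ) : ℝ)) : ℝ) : ℂ)
              + G₁ d * G₂ e * (((x / ((d * e : ℕ) : ℝ)) * Real.log (x / ((d * e : ℕ) : ℝ))
                  + γc * (x / ((d * e : ℕ) : ℝ)) : ℝ) : ℂ)) := by
          refine Finset.sum_congr rfl fun d hd => ?_
          rw [Finset.mul_sum]
          refine Finset.sum_congr rfl fun e he => ?_
          have hstep : N / d / e = ⌊x / ((d * e : ℕ) : ℝ)⌋₊ := by
            rw [Nat.div_div_eq_div_mul, hN, ← Nat.floor_div_natCast]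
          have hΔy : (∑ n ∈ Finset.Icc 1 ⌊x / ((d * e : ℕ) : ℝ)⌋₊, (n.divisors.card : ℝ))
              = Δ (x / ((d * e : ℕ) : ℝ)) + (x / ((d * e : ℕ) : ℝ))
                  * Real.log (x / ((d * e : ℕ) : ℝ)) + γc * (x / ((d * e : ℕ) : ℝ)) := by
            rw [Δ, hγ]; ring
          have hdval : D (N / d / e) = ((Δ (x / ((d * e : ℕ) : ℝ))
              + (x / ((d * e : ℕ) : ℝ)) * Real.log (x / ((d * e : ℕ) : ℝ))
              + γc * (x / ((d * e : ℕ) : ℝ)) : ℝ) : ℂ) := by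
            rw [hstep, hD, ← hΔy]
            push_cast
            rfl
          rw [hdval]
          push_cast
          ring
      _ = (∑ d ∈ m₁.divisors, ∑ e ∈ m₂.divisors,
              G₁ d * G₂ e * ((Δ (x / ((d * e : ℕ) : ℝ)) : ℝ) : ℂ))
            + ∑ d ∈ m₁.divisors, ∑ e ∈ m₂.divisors,
              G₁ d * G₂ e * (((x / ((d * e : ℕ) : ℝ)) * Real.log (x / ((d * e : ℕ) : ℝ))
                + γc * (x / ((d * e : ℕ) : ℝ)) : ℝ) : ℂ) := by
          rw [← Finset.sum_add_distrib]
          exact Finset.sum_congr rfl fun d _ => Finset.sum_add_distrib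
      _ = ∑ d ∈ m₁.divisors, ∑ e ∈ m₂.divisors,
            G₁ d * G₂ e * ((Δ (x / ((d * e : ℕ) : ℝ)) : ℝ) : ℂ) := by
          rw [Tzero, add_zero]
  have hRO : (fun x : ℝ => ∑ d ∈ m₁.divisors, ∑ e ∈ m₂.divisors,
      G₁ d * G₂ e * ((Δ (x / ((d * e : ℕ) : ℝ)) : ℝ) : ℂ)) =O[atTop]
      fun x : ℝ => x ^ a := by
    apply Asymptotics.IsBigO.fun_sum
    intro d hd
    apply Asymptotics.IsBigO.fun_sum
    intro e he
    have hd1 : 1 ≤ d := Nat.pos_of_mem_divisors hd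
    have he1 : 1 ≤ e := Nat.pos_of_mem_divisors he
    have hk1 : (1 : ℝ) ≤ ((d * e : ℕ) : ℝ) := by
      exact_mod_cast Nat.one_le_iff_ne_zero.mpr (Nat.mul_ne_zero (by omega) (by omega))
    set k : ℝ := ((d * e : ℕ) : ℝ) with hk
    have hk0 : (0 : ℝ) < k := by linarith
    have h1 : Tendsto (fun x : ℝ => x / k) atTop atTop := tendsto_id.atTop_div_const hk0
    have h2 : (fun x : ℝ => Δ (x / k)) =O[atTop] fun x => (x / k) ^ a := hΔ.comp_tendsto h1
    have h3 : (fun x : ℝ => (x / k) ^ a) =O[atTop] fun x => x ^ a := by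
      apply Asymptotics.IsBigO.of_bound 1
      filter_upwards [eventually_ge_atTop (0 : ℝ)] with x hx
      rw [one_mul, Real.norm_eq_abs, Real.norm_eq_abs,
        abs_of_nonneg (Real.rpow_nonneg (by positivity) _),
        abs_of_nonneg (Real.rpow_nonneg hx _)]
      exact Real.rpow_le_rpow (by positivity) (div_le_self hx hk1) ha.le
    have h4 := h2.trans h3
    have h5 : (fun x : ℝ => ((Δ (x / k) : ℝ) : ℂ)) =O[atTop] fun x : ℝ => x ^ a := by
      refine Asymptotics.IsBigO.trans ?_ h4
      apply Asymptotics.isBigO_of_le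
      intro x
      simp [Complex.norm_real]
    exact h5.const_mul_left _
  exact hRO.congr' hEq.symm (Filter.EventuallyEq.refl _ _)
end

section
/- If f : ℕ → ℂ is multiplicative and has bounded partial sums, then for each ε > 0 there exists M > 0 such that for every prime p ≥ M and every integer k ≥ 1, |f(p^k)| ≤ 1 + ε. -/
lemma mult_prod_aux (f : ℕ → ℂ) (hmul : IsMultiplicativeFn f) (k : ℕ → ℕ) :
    ∀ t : Finset ℕ, (∀ p ∈ t, Nat.Prime p) →
      f (∏ p ∈ t, p ^ k p) = ∏ p ∈ t, f (p ^ k p) := by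
  intro t
  induction t using Finset.induction with
  | empty => intro _; simp [hmul.1]
  | @insert a s ha ih =>
    intro hpr
    have hap : Nat.Prime a := hpr a (Finset.mem_insert_self a s)
    have hcop : Nat.Coprime (a ^ k a) (∏ p ∈ s, p ^ k p) := by
      apply Nat.Coprime.prod_right
      intro q hq
      have hqp : Nat.Prime q := hpr q (Finset.mem_insert_of_mem hq)
      have hne : a ≠ q := by rintro rfl; exact ha hq
      exact Nat.Coprime.pow _ _ ((Nat.coprime_primes hap hqp).mpr hne)
    rw [Finset.prod_insert ha, Finset.prod_insert ha,
      hmul.2 _ _ hcop, ih (fun p hp => hpr p (Finset.mem_insert_of_mem hp))]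

theorem stmt_7 (f : ℕ → ℂ)
    (hmul : IsMultiplicativeFn f)
    (hbdd : HasBoundedPartialSums f) :
    ∀ ε : ℝ, 0 < ε → ∃ M : ℝ, 0 < M ∧
      ∀ p : ℕ, p.Prime → M ≤ (p : ℝ) → ∀ k : ℕ, 1 ≤ k → ‖f (p ^ k)‖ ≤ 1 + ε := by
  intro ε hε
  obtain ⟨C, hC, hS⟩ := hbdd
  -- every value of f at n ≥ 2 is bounded by 2C
  have hfb : ∀ n : ℕ, 2 ≤ n → ‖f n‖ ≤ 2 * C := by
    intro n hn
    obtain ⟨m, rfl⟩ : ∃ m, n = m + 1 := ⟨n - 1, by omega⟩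
    have hm1 : 1 ≤ m := by omega
    have hsum : ∑ i ∈ Finset.Icc 1 (m + 1), f i
        = (∑ i ∈ Finset.Icc 1 m, f i) + f (m + 1) :=
      Finset.sum_Icc_succ_top (by omega) f
    have h1 := hS (m + 1) (by omega)
    have h2 := hS m hm1
    have : f (m + 1) = (∑ i ∈ Finset.Icc 1 (m + 1), f i) - ∑ i ∈ Finset.Icc 1 m, f i := by
      rw [hsum]; ring
    calc ‖f (m + 1)‖ = ‖(∑ i ∈ Finset.Icc 1 (m + 1), f i) - ∑ i ∈ Finset.Icc 1 m, f i‖ := by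
          rw [this]
      _ ≤ ‖∑ i ∈ Finset.Icc 1 (m + 1), f i‖ + ‖∑ i ∈ Finset.Icc 1 m, f i‖ :=
          norm_sub_le _ _
      _ ≤ C + C := add_le_add h1 h2
      _ = 2 * C := by ring
  -- the set of bad primes
  set B : Set ℕ := {p | p.Prime ∧ ∃ k, 1 ≤ k ∧ 1 + ε < ‖f (p ^ k)‖} with hB
  have hBfin : B.Finite := by
    by_contra hinf
    have hinf : B.Infinite := hinf
    obtain ⟨r0, hr0⟩ := pow_unbounded_of_one_lt (2 * C) (by linarith : (1:ℝ) < 1 + ε)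
    obtain ⟨t, hts, htc⟩ := hinf.exists_subset_card_eq (r0 + 1)
    classical
    -- choose exponents
    have hchoose : ∀ p ∈ t, ∃ k, 1 ≤ k ∧ 1 + ε < ‖f (p ^ k)‖ := by
      intro p hp; exact (hts hp).2
    choose! kf hkf1 hkf2 using hchoose
    have hprime : ∀ p ∈ t, Nat.Prime p := fun p hp => (hts hp).1
    have hprod := mult_prod_aux f hmul kf t hprime
    set n := ∏ p ∈ t, p ^ kf p with hn
    have htne : t.Nonempty := Finset.card_pos.mp (by omega)
    obtain ⟨p0, hp0⟩ := htne
    have hone : ∀ p ∈ t, 1 ≤ p ^ kf p := fun p hp =>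
      Nat.one_le_pow _ _ (hprime p hp).pos
    have hn2 : 2 ≤ n := by
      have h1 : p0 ^ kf p0 ≤ n := Finset.single_le_prod' hone hp0
      have h2 : 2 ≤ p0 ^ kf p0 :=
        le_trans (hprime p0 hp0).two_le (Nat.le_self_pow (by have := hkf1 p0 hp0; omega) _)
      omega
    have hlow : (1 + ε) ^ (r0 + 1) ≤ ‖f n‖ := by
      rw [hn, hprod, norm_prod]
      calc (1 + ε) ^ (r0 + 1) = ∏ _p ∈ t, (1 + ε) := by
            rw [Finset.prod_const, htc]
        _ ≤ ∏ p ∈ t, ‖f (p ^ kf p)‖ :=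
            Finset.prod_le_prod (fun _ _ => by linarith) (fun p hp => (hkf2 p hp).le)
    have hup : ‖f n‖ ≤ 2 * C := hfb n hn2
    have : (1 + ε) ^ r0 ≤ (1 + ε) ^ (r0 + 1) := by
      apply pow_le_pow_right₀ (by linarith); omega
    linarith
  -- take M above all bad primes
  obtain ⟨b, hb⟩ := hBfin.bddAbove
  refine ⟨(b : ℝ) + 1, by positivity, ?_⟩
  intro p hp hpM k hk
  by_contra hcon
  push_neg at hcon
  have hpB : p ∈ B := ⟨hp, k, hk, hcon⟩
  have : (p : ℝ) ≤ b := by exact_mod_cast hb hpB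
  linarith
end
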